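/- arXiv:2410.23809 — 7 statements merged into one kernel-verified Lean document; each statement's English description precedes it below -/
import Mathlib

section
/- Let E be the edge set of a non-crossing spanning tree on linearly ordered points p_1,...,p_n. Then the map ρ_E, assigning to each gap g_i the shortest edge of E covering g_i, is well-defined and is a bijection from the set of gaps {g_1,...,g_{n-1}} to E. -/
/- Non-crossing spanning trees on linearly ordered points p_0, ..., p_{n-1}.
An edge is a pair (a, b) of indices with a < b < n.
Gap k (for k + 1 < n) lies between points k and k+1. -/

namespace NCST

attribute [local instance] Classical.propDecidable

abbrev Edge := ℕ × ℕ

/-- `e` covers `f`. -/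
def covers (e f : Edge) : Prop := e.1 ≤ f.1 ∧ f.2 ≤ e.2

/-- `e` covers the gap between points `k` and `k+1`. -/
def coversGap (e : Edge) (k : ℕ) : Prop := e.1 ≤ k ∧ k + 1 ≤ e.2

/-- Two edges cross: their endpoints interleave in the linear order. -/
def crosses (e f : Edge) : Prop :=
  (e.1 < f.1 ∧ f.1 < e.2 ∧ e.2 < f.2) ∨ (f.1 < e.1 ∧ e.1 < f.2 ∧ f.2 < e.2)

/-- The length of an edge. -/
def elen (e : Edge) : ℕ := e.2 - e.1

/-- The graph on the `n` points induced by an edge set. -/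
def graphOf (n : ℕ) (E : Finset Edge) : SimpleGraph (Fin n) :=
  SimpleGraph.fromRel (fun a b => ((a : ℕ), (b : ℕ)) ∈ E)

def ValidEdges (n : ℕ) (E : Finset Edge) : Prop := ∀ e ∈ E, e.1 < e.2 ∧ e.2 < n

def NonCrossing (E : Finset Edge) : Prop := ∀ e ∈ E, ∀ f ∈ E, ¬ crosses e f

/-- `E` is the edge set of a non-crossing spanning tree on the points `0, …, n-1`. -/
def IsNCSpanningTree (n : ℕ) (E : Finset Edge) : Prop :=
  ValidEdges n E ∧ NonCrossing E ∧ (graphOf n E).IsTree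

/-- `ρ` assigns to each gap `k` (with `k + 1 < n`) a shortest edge of `E` covering it. -/
def IsRho (n : ℕ) (E : Finset Edge) (ρ : ℕ → Edge) : Prop :=
  ∀ k, k + 1 < n →
    ρ k ∈ E ∧ coversGap (ρ k) k ∧ ∀ f ∈ E, coversGap f k → elen (ρ k) ≤ elen f

/-- `ρ` is a bijection from the gaps `{0, …, n-2}` onto `E`. -/
def RhoBij (n : ℕ) (E : Finset Edge) (ρ : ℕ → Edge) : Prop :=
  (∀ k l, k + 1 < n → l + 1 < n → ρ k = ρ l → k = l) ∧
  (∀ e ∈ E, ∃ k, k + 1 < n ∧ ρ k = e)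

/-- `e` is a short edge for the gap `k`. -/
def isShort (e : Edge) (k : ℕ) : Prop := e = (k, k + 1)

/-- `e` is a near edge for the gap `k`: it covers the gap and shares exactly one
endpoint with `{k, k+1}`. -/
def isNear (e : Edge) (k : ℕ) : Prop :=
  coversGap e k ∧ ((e.1 = k ∧ e.2 ≠ k + 1) ∨ (e.1 ≠ k ∧ e.2 = k + 1))

/-- `e` is a far edge for the gap `k`: it covers the gap and shares no endpoint
with `{k, k+1}`. -/
def isFar (e : Edge) (k : ℕ) : Prop := coversGap e k ∧ e.1 ≠ k ∧ e.2 ≠ k + 1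

/-- The edges of `E` not covered by any other edge of `E`. -/
noncomputable def Uncovered (E : Finset Edge) : Finset Edge :=
  E.filter (fun e => ∀ f ∈ E, f ≠ e → ¬ covers f e)

/-- Gap `i` is a near-near gap: the paired edges differ and are both near. -/
def NearNear (n : ℕ) (ρ ρ' : ℕ → Edge) (i : ℕ) : Prop :=
  i + 1 < n ∧ ρ i ≠ ρ' i ∧ isNear (ρ i) i ∧ isNear (ρ' i) i

/-- Directed edge `g_i → g_j` of the conflict graph `H(T,T')`. -/
def conflictEdge (ρ ρ' : ℕ → Edge) (i j : ℕ) : Prop :=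
  i ≠ j ∧
  (crosses (ρ i) (ρ' j) ∨
   (covers (ρ' j) (ρ i) ∧ coversGap (ρ i) j) ∨
   (covers (ρ i) (ρ' j) ∧ coversGap (ρ' j) i))

/-- The subgraph of the directed graph `R` induced on `S` has no directed cycle. -/
def AcyclicOn (R : ℕ → ℕ → Prop) (S : Set ℕ) : Prop :=
  ∀ a, ¬ Relation.TransGen (fun x y => x ∈ S ∧ y ∈ S ∧ R x y) a a

/-- Two edges are adjacent: they share an endpoint. -/
def adjEdges (e f : Edge) : Prop :=
  e.1 = f.1 ∨ e.1 = f.2 ∨ e.2 = f.1 ∨ e.2 = f.2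


/-- If a walk goes from a vertex satisfying `P` to one not satisfying `P`,
some edge of `E` crosses the boundary of `P`. -/
lemma cut_edge {n : ℕ} {E : Finset Edge} (hV : ValidEdges n E) (P : ℕ → Prop)
    {u v : Fin n} (w : (graphOf n E).Walk u v) (hu : P u.val) (hv : ¬ P v.val) :
    ∃ f ∈ E, (P f.1 ∧ ¬ P f.2) ∨ (¬ P f.1 ∧ P f.2) := by
  obtain ⟨d, _, hd1, hd2⟩ := w.exists_boundary_dart {x : Fin n | P x.val} hu hv
  have h := d.adj
  simp only [graphOf, SimpleGraph.fromRel_adj] at h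
  rcases h.2 with h1 | h1
  · exact ⟨_, h1, Or.inl ⟨hd1, hd2⟩⟩
  · exact ⟨_, h1, Or.inr ⟨hd2, hd1⟩⟩

/-- Every gap is covered by some edge of a connected valid edge set. -/
lemma gap_covered {n : ℕ} {E : Finset Edge} (hV : ValidEdges n E)
    (hc : (graphOf n E).Connected) {k : ℕ} (hk : k + 1 < n) :
    ∃ e ∈ E, coversGap e k := by
  obtain ⟨w⟩ := hc.preconnected ⟨k, by omega⟩ ⟨k + 1, hk⟩
  obtain ⟨f, hf, hcase⟩ := cut_edge hV (fun x => x ≤ k) w (le_refl k) (Nat.not_succ_le_self k)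
  have hvf := hV f hf
  rcases hcase with ⟨h1, h2⟩ | ⟨h1, h2⟩
  · exact ⟨f, hf, h1, by omega⟩
  · exact absurd rfl (by omega : ¬ (0:ℕ) = 0)

/-- Nesting lemma: a minimal edge covering a gap is nested inside any other
edge of a non-crossing family covering the same gap. -/
lemma nest {e f : Edge} {k : ℕ} (he : e.1 < e.2) (hf : f.1 < f.2)
    (hek : coversGap e k) (hfk : coversGap f k) (hnc : ¬ crosses e f)
    (hlen : elen e ≤ elen f) : f = e ∨ (f.1 ≤ e.1 ∧ e.2 ≤ f.2) := by
  obtain ⟨he1, he2⟩ := hek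
  obtain ⟨hf1, hf2⟩ := hfk
  unfold crosses at hnc
  unfold elen at hlen
  have : (f.1 = e.1 ∧ f.2 = e.2) ∨ (f.1 ≤ e.1 ∧ e.2 ≤ f.2) := by omega
  rcases this with ⟨h1, h2⟩ | h
  · exact Or.inl (Prod.ext_iff.mpr ⟨h1, h2⟩)
  · exact Or.inr h

/-- No edge can be minimal for two distinct gaps. -/
lemma inj_aux {n : ℕ} {E : Finset Edge} (hV : ValidEdges n E) (hNC : NonCrossing E)
    (hc : (graphOf n E).Connected) {e : Edge} {k l : ℕ} (hkl : k < l)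
    (he : e ∈ E) (hck : coversGap e k) (hcl : coversGap e l)
    (hmink : ∀ f ∈ E, coversGap f k → elen e ≤ elen f)
    (hminl : ∀ f ∈ E, coversGap f l → elen e ≤ elen f) : False := by
  obtain ⟨hck1, hck2⟩ := hck
  obtain ⟨hcl1, hcl2⟩ := hcl
  have hve := hV e he
  obtain ⟨w⟩ := hc.preconnected ⟨k + 1, by omega⟩ ⟨e.2, hve.2⟩
  obtain ⟨f, hf, hcase⟩ := cut_edge hV (fun x => k + 1 ≤ x ∧ x ≤ l) w
    ⟨le_refl _, hkl⟩ (by simp only []; omega)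
  have hvf := hV f hf
  rcases hcase with ⟨⟨h1, h2⟩, h3⟩ | ⟨h3, h1, h2⟩
  · -- f.1 ∈ [k+1, l], f.2 ∉ [k+1, l] ⇒ f covers gap l
    have hcfl : coversGap f l := ⟨h2, by omega⟩
    rcases nest hve.1 hvf.1 ⟨hcl1, hcl2⟩ hcfl (hNC e he f hf)
        (hminl f hf hcfl) with rfl | ⟨h4, h5⟩
    · omega
    · omega
  · -- f.2 ∈ [k+1, l], f.1 ∉ [k+1, l] ⇒ f covers gap k
    have hcfk : coversGap f k := ⟨by omega, h1⟩
    rcases nest hve.1 hvf.1 ⟨hck1, hck2⟩ hcfk (hNC e he f hf)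
        (hmink f hf hcfk) with rfl | ⟨h4, h5⟩
    · omega
    · omega

/-- A valid edge set has the same cardinality as the edge set of its graph. -/
lemma card_eq {n : ℕ} {E : Finset Edge} (hV : ValidEdges n E)
    [Fintype ((graphOf n E).edgeSet)] :
    E.card = (graphOf n E).edgeFinset.card := by
  apply Finset.card_bij
    (i := fun e he => s((⟨e.1, lt_trans (hV e he).1 (hV e he).2⟩ : Fin n),
      (⟨e.2, (hV e he).2⟩ : Fin n)))
  · intro e he
    rw [SimpleGraph.mem_edgeFinset, SimpleGraph.mem_edgeSet, graphOf,
      SimpleGraph.fromRel_adj]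
    have hv := hV e he
    exact ⟨by simp only [ne_eq, Fin.mk.injEq]; omega, Or.inl he⟩
  · intro a1 ha1 a2 ha2 h
    have hv1 := hV a1 ha1
    have hv2 := hV a2 ha2
    simp only [Sym2.eq_iff, Fin.mk.injEq] at h
    have : a1.1 = a2.1 ∧ a1.2 = a2.2 := by omega
    exact Prod.ext_iff.mpr this
  · intro s hs
    induction s using Sym2.ind with
    | _ a b =>
      rw [SimpleGraph.mem_edgeFinset, SimpleGraph.mem_edgeSet, graphOf,
        SimpleGraph.fromRel_adj] at hs
      obtain ⟨hne, h | h⟩ := hs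
      · exact ⟨(a.val, b.val), h, rfl⟩
      · exact ⟨(b.val, a.val), h, Sym2.eq_swap⟩

/-- for a non-crossing spanning tree `E`, the map assigning to each
gap the shortest edge of `E` covering it is well-defined and a bijection from
the gaps onto `E`. -/
theorem stmt1 (n : ℕ) (E : Finset Edge) (hT : IsNCSpanningTree n E) :
    ∃ ρ : ℕ → Edge, IsRho n E ρ ∧ RhoBij n E ρ := by
  obtain ⟨hV, hNC, hTree⟩ := hT
  have hconn := hTree.isConnected
  have hn1 : 1 ≤ n := by
    obtain ⟨v⟩ := hconn.nonempty
    exact v.pos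
  -- existence of shortest covering edges
  have hex : ∀ k, k + 1 < n → ∃ e, e ∈ E ∧ coversGap e k ∧
      ∀ f ∈ E, coversGap f k → elen e ≤ elen f := by
    intro k hk
    obtain ⟨e0, he0, hc0⟩ := gap_covered hV hconn hk
    obtain ⟨e, he, hmin⟩ := (E.filter (fun f => coversGap f k)).exists_min_image
      elen ⟨e0, Finset.mem_filter.mpr ⟨he0, hc0⟩⟩
    rw [Finset.mem_filter] at he
    exact ⟨e, he.1, he.2, fun f hf hcf => hmin f (Finset.mem_filter.mpr ⟨hf, hcf⟩)⟩
  classical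
  set ρ : ℕ → Edge := fun k => if h : k + 1 < n then (hex k h).choose else (0, 0)
    with hρdef
  have hspec : ∀ k, k + 1 < n → ρ k ∈ E ∧ coversGap (ρ k) k ∧
      ∀ f ∈ E, coversGap f k → elen (ρ k) ≤ elen f := by
    intro k h
    have hs := (hex k h).choose_spec
    simp only [hρdef, dif_pos h]
    exact hs
  have hinj : ∀ k l, k + 1 < n → l + 1 < n → ρ k = ρ l → k = l := by
    intro k l hk hl heq
    by_contra hne
    obtain ⟨hkE, hkc, hkm⟩ := hspec k hk
    obtain ⟨hlE, hlc, hlm⟩ := hspec l hl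
    rw [heq] at hkE hkc hkm
    rcases lt_or_gt_of_ne hne with h | h
    · exact inj_aux hV hNC hconn h hlE hkc hlc hkm hlm
    · exact inj_aux hV hNC hconn h hlE hlc hkc hlm hkm
  refine ⟨ρ, hspec, hinj, ?_⟩
  -- surjectivity via cardinality
  haveI : Fintype ((graphOf n E).edgeSet) := Fintype.ofFinite _
  have hcard : E.card = n - 1 := by
    have h1 := hTree.card_edgeFinset
    rw [Fintype.card_fin] at h1
    have h2 := card_eq (n := n) hV
    omega
  have himg : (Finset.range (n - 1)).image ρ ⊆ E := by
    intro x hx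
    obtain ⟨a, ha, rfl⟩ := Finset.mem_image.mp hx
    rw [Finset.mem_range] at ha
    exact (hspec a (by omega)).1
  have hcard2 : ((Finset.range (n - 1)).image ρ).card = n - 1 := by
    rw [Finset.card_image_of_injOn, Finset.card_range]
    intro a ha b hb hab
    rw [Finset.coe_range, Set.mem_Iio] at ha hb
    exact hinj a b (by omega) (by omega) hab
  have heq : (Finset.range (n - 1)).image ρ = E :=
    Finset.eq_of_subset_of_card_le himg (by rw [hcard2, hcard])
  intro e he
  rw [← heq] at he
  obtain ⟨a, ha, hae⟩ := Finset.mem_image.mp he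
  rw [Finset.mem_range] at ha
  exact ⟨a, by omega, hae⟩

end NCST
end

section
/- Let T be the edge set of a non-crossing spanning tree on linearly ordered points p_1,...,p_n. Then for every edge e of T, the set of edges of T that cover e is totally ordered under the cover relation; equivalently, the cover relation on T is a partial order whose Hasse diagram is a rooted forest. -/
/- Non-crossing spanning trees on linearly ordered points p_0, ..., p_{n-1}.
An edge is a pair (a, b) of indices with a < b < n.
Gap k (for k + 1 < n) lies between points k and k+1. -/

namespace NCST

attribute [local instance] Classical.propDecidable

/-- in a non-crossing spanning tree, the set of edges covering any
fixed edge is totally ordered under the cover relation. -/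
theorem stmt2 (n : ℕ) (E : Finset Edge) (hT : IsNCSpanningTree n E) :
    ∀ e ∈ E, ∀ f ∈ E, ∀ g ∈ E,
      covers f e → covers g e → covers f g ∨ covers g f := by
  intro e he f hf g hg hfe hge
  have hv := hT.1 e he
  have hnc := hT.2.1 f hf g hg
  unfold covers at *
  unfold crosses at hnc
  omega


end NCST
end

section
/- Let T be a non-crossing spanning tree on linearly ordered points p_1,...,p_n, let k ≥ 1 be the number of edges of T not covered by any other edge of T, let S be the set of short edges of T (edges e_i = ρ_T(g_i) equal to {p_i,p_{i+1}}), and let W be the set of far edges of T (edges e_i = ρ_T(g_i) sharing no endpoint with {p_i,p_{i+1}}). Then |S| ≥ k and |W| ≤ |S| - k. -/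
/- Non-crossing spanning trees on linearly ordered points p_0, ..., p_{n-1}.
An edge is a pair (a, b) of indices with a < b < n.
Gap k (for k + 1 < n) lies between points k and k+1. -/

namespace NCST

attribute [local instance] Classical.propDecidable

lemma tri {e f : Edge} (h : ¬ crosses e f) :
    covers e f ∨ covers f e ∨ e.2 ≤ f.1 ∨ f.2 ≤ e.1 := by
  unfold crosses at h; unfold covers; omega
lemma covers_trans {e f g : Edge} (h1 : covers e f) (h2 : covers f g) : covers e g := by
  unfold covers at *; omega
lemma edge_ne {g e : Edge} (h : g ≠ e) : g.1 ≠ e.1 ∨ g.2 ≠ e.2 := by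
  by_contra hc; push_neg at hc; exact h (Prod.ext hc.1 hc.2)
lemma covers_antisymm {e f : Edge} (hf : f.1 < f.2) (h1 : covers e f) (h2 : elen e ≤ elen f) :
    e = f := by
  unfold covers elen at *; exact Prod.ext (by omega) (by omega)
lemma elen_lt_of_proper {e g : Edge} (h : covers e g) (hne : g ≠ e) (hg : g.1 < g.2) :
    elen g < elen e := by
  rcases edge_ne hne with h1 | h1 <;> (unfold covers elen at *; omega)
lemma exists_max_cover (P : Finset Edge) (hP : ∀ g ∈ P, g.1 < g.2) {f : Edge} (hf : f ∈ P) :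
    ∃ g ∈ P, covers g f ∧ ∀ h ∈ P, h ≠ g → ¬ covers h g := by
  obtain ⟨g, hg, hmax⟩ := (P.filter (fun g => covers g f)).exists_max_image elen
    ⟨f, by simp only [Finset.mem_filter]; exact ⟨hf, le_refl _, le_refl _⟩⟩
  rw [Finset.mem_filter] at hg
  refine ⟨g, hg.1, hg.2, fun h hh hne hch => ?_⟩
  have hhf : h ∈ P.filter (fun g => covers g f) := by
    rw [Finset.mem_filter]; exact ⟨hh, covers_trans hch hg.2⟩
  exact hne (covers_antisymm (hP g hg.1) hch (hmax h hhf))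

lemma main_lemma (n : ℕ) (T : Finset Edge) (ρ : ℕ → Edge)
    (hV : ValidEdges n T) (hNC : NonCrossing T) (hρ : IsRho n T ρ)
    (hbij : RhoBij n T ρ) :
    ∀ m e, e ∈ T → elen e ≤ m →
      ((Finset.Ico e.1 e.2).filter (fun i => isFar (ρ i) i)).card + 1 ≤
      ((Finset.Ico e.1 e.2).filter (fun i => isShort (ρ i) i)).card := by
  intro m
  induction m with
  | zero =>
    intro e he h0
    have := hV e he; unfold elen at h0; omega
  | succ m ih =>
    intro e he hlen
    obtain ⟨hab, hbn⟩ := hV e he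
    obtain ⟨i₀, hi₀n, hρi₀⟩ := hbij.2 e he
    have hcov₀ : e.1 ≤ i₀ ∧ i₀ + 1 ≤ e.2 := by
      have h := (hρ i₀ hi₀n).2.1; rw [hρi₀] at h; exact h
    -- the set of proper edges under e
    set P : Finset Edge := T.filter (fun g => covers e g ∧ g ≠ e) with hPdef
    have hPmem : ∀ g ∈ P, g ∈ T ∧ covers e g ∧ g ≠ e := by
      intro g hg; rw [hPdef, Finset.mem_filter] at hg; exact ⟨hg.1, hg.2.1, hg.2.2⟩
    have hPvalid : ∀ g ∈ P, g.1 < g.2 := fun g hg => (hV g (hPmem g hg).1).1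
    -- maximal proper edges
    set M : Finset Edge := P.filter (fun g => ∀ h ∈ P, h ≠ g → ¬ covers h g) with hMdef
    have hMP : ∀ g ∈ M, g ∈ P := by
      intro g hg; rw [hMdef, Finset.mem_filter] at hg; exact hg.1
    -- Fact A : gaps other than i₀ are matched to proper edges
    have factA : ∀ i, e.1 ≤ i → i < e.2 → i ≠ i₀ →
        ρ i ∈ P ∧ coversGap (ρ i) i := by
      intro i h1 h2 hne
      have hin : i + 1 < n := by omega
      obtain ⟨hmem, hgap, hmin⟩ := hρ i hin
      have hρne : ρ i ≠ e := by
        intro hc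
        exact hne (hbij.1 i i₀ hin hi₀n (hc.trans hρi₀.symm))
      have hlen2 : elen (ρ i) ≤ elen e := hmin e he ⟨h1, by omega⟩
      have hnc := hNC e he (ρ i) hmem
      have hcov : covers e (ρ i) := by
        rcases tri hnc with h | h | h | h
        · exact h
        · exact absurd (covers_antisymm hab h hlen2) hρne
        · exact absurd hgap.1 (by omega)
        · exact absurd hgap.2 (by omega)
      rw [hPdef, Finset.mem_filter]
      exact ⟨⟨hmem, hcov, hρne⟩, hgap⟩
    -- Fact B : every proper edge is covered by some maximal one
    have factB : ∀ f ∈ P, ∃ g ∈ M, covers g f := by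
      intro f hf
      obtain ⟨g, hg, hgf, hmax⟩ := exists_max_cover P hPvalid hf
      exact ⟨g, by rw [hMdef, Finset.mem_filter]; exact ⟨hg, hmax⟩, hgf⟩
    -- Fact D : no maximal proper edge covers gap i₀
    have factD : ∀ g ∈ M, ¬ (g.1 ≤ i₀ ∧ i₀ + 1 ≤ g.2) := by
      intro g hg hc
      obtain ⟨hgT, hgcov, hgne⟩ := hPmem g (hMP g hg)
      have h1 : elen e ≤ elen g := by
        have := (hρ i₀ hi₀n).2.2 g hgT hc; rw [hρi₀] at this; exact this
      exact absurd h1 (by have := elen_lt_of_proper hgcov hgne (hPvalid g (hMP g hg)); omega)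
    -- decomposition of the gaps under e
    have hnotmem : i₀ ∉ M.biUnion (fun g => Finset.Ico g.1 g.2) := by
      simp only [Finset.mem_biUnion, Finset.mem_Ico]
      rintro ⟨g, hg, h1, h2⟩
      exact factD g hg ⟨h1, by omega⟩
    have hdecomp : Finset.Ico e.1 e.2 = insert i₀ (M.biUnion (fun g => Finset.Ico g.1 g.2)) := by
      ext i
      simp only [Finset.mem_insert, Finset.mem_biUnion, Finset.mem_Ico]
      constructor
      · intro hi
        by_cases h : i = i₀
        · exact Or.inl h
        · obtain ⟨hρP, hgap⟩ := factA i hi.1 hi.2 h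
          obtain ⟨g, hgM, hgc⟩ := factB (ρ i) hρP
          exact Or.inr ⟨g, hgM, by unfold covers at hgc; unfold coversGap at hgap; omega⟩
      · rintro (h | ⟨g, hgM, hi⟩)
        · omega
        · have := (hPmem g (hMP g hgM)).2.1
          unfold covers at this; omega
    -- disjointness of the maximal intervals
    have hdisj : ∀ g ∈ M, ∀ g' ∈ M, g ≠ g' →
        Disjoint (Finset.Ico g.1 g.2) (Finset.Ico g'.1 g'.2) := by
      intro g hg g' hg' hne
      obtain ⟨hgT, _, _⟩ := hPmem g (hMP g hg)
      obtain ⟨hg'T, _, _⟩ := hPmem g' (hMP g' hg')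
      have hmaxg : ∀ h ∈ P, h ≠ g → ¬ covers h g := by
        have := hg; rw [hMdef, Finset.mem_filter] at this; exact this.2
      have hmaxg' : ∀ h ∈ P, h ≠ g' → ¬ covers h g' := by
        have := hg'; rw [hMdef, Finset.mem_filter] at this; exact this.2
      have h1 : ¬ covers g g' := hmaxg' g (hMP g hg) hne
      have h2 : ¬ covers g' g := hmaxg g' (hMP g' hg') hne.symm
      rcases tri (hNC g hgT g' hg'T) with h | h | h | h
      · exact absurd h h1
      · exact absurd h h2
      · rw [Finset.disjoint_left]; intro x hx hx'; simp only [Finset.mem_Ico] at hx hx'; omega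
      · rw [Finset.disjoint_left]; intro x hx hx'; simp only [Finset.mem_Ico] at hx hx'; omega
    -- card decomposition for any predicate
    have hcard : ∀ p : ℕ → Prop,
        ((Finset.Ico e.1 e.2).filter p).card =
        (∑ g ∈ M, ((Finset.Ico g.1 g.2).filter p).card) + (if p i₀ then 1 else 0) := by
      intro p
      rw [hdecomp, Finset.filter_insert]
      have hcBU : ((M.biUnion (fun g => Finset.Ico g.1 g.2)).filter p).card =
          ∑ g ∈ M, ((Finset.Ico g.1 g.2).filter p).card := by
        rw [Finset.filter_biUnion]
        exact Finset.card_biUnion (fun g hg g' hg' hne =>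
          Finset.disjoint_filter_filter (hdisj g hg g' hg' hne))
      by_cases hp : p i₀
      · rw [if_pos hp, if_pos hp, Finset.card_insert_of_notMem
          (fun hc => hnotmem (Finset.mem_of_mem_filter _ hc)), hcBU]
      · rw [if_neg hp, if_neg hp, hcBU, Nat.add_zero]
    -- induction hypothesis applied to each maximal edge
    have hIH : ∀ g ∈ M, ((Finset.Ico g.1 g.2).filter (fun i => isFar (ρ i) i)).card + 1 ≤
        ((Finset.Ico g.1 g.2).filter (fun i => isShort (ρ i) i)).card := by
      intro g hg
      obtain ⟨hgT, hgcov, hgne⟩ := hPmem g (hMP g hg)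
      exact ih g hgT (by have := elen_lt_of_proper hgcov hgne (hPvalid g (hMP g hg)); omega)
    have hsum : (∑ g ∈ M, ((Finset.Ico g.1 g.2).filter (fun i => isFar (ρ i) i)).card) + M.card ≤
        ∑ g ∈ M, ((Finset.Ico g.1 g.2).filter (fun i => isShort (ρ i) i)).card := by
      calc (∑ g ∈ M, ((Finset.Ico g.1 g.2).filter (fun i => isFar (ρ i) i)).card) + M.card
          = ∑ g ∈ M, (((Finset.Ico g.1 g.2).filter (fun i => isFar (ρ i) i)).card + 1) := by
            rw [Finset.sum_add_distrib, Finset.sum_const, smul_eq_mul, mul_one]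
        _ ≤ _ := Finset.sum_le_sum hIH
    rw [hcard (fun i => isFar (ρ i) i), hcard (fun i => isShort (ρ i) i)]
    -- helper to get a maximal edge containing a given gap ≠ i₀
    have hget : ∀ i, e.1 ≤ i → i < e.2 → i ≠ i₀ → ∃ g ∈ M, g.1 ≤ i ∧ i < g.2 := by
      intro i h1 h2 hne
      have : i ∈ Finset.Ico e.1 e.2 := Finset.mem_Ico.mpr ⟨h1, h2⟩
      rw [hdecomp] at this
      simp only [Finset.mem_insert, Finset.mem_biUnion, Finset.mem_Ico] at this
      rcases this with h | ⟨g, hgM, hi⟩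
      · exact absurd h hne
      · exact ⟨g, hgM, hi⟩
    by_cases hs : e.1 = i₀ ∧ e.2 = i₀ + 1
    · -- short case
      have h1 : isShort (ρ i₀) i₀ := by
        rw [hρi₀]; exact Prod.ext hs.1 hs.2
      have h2 : ¬ isFar (ρ i₀) i₀ := by
        rw [hρi₀]; intro hc; exact hc.2.1 hs.1
      rw [if_pos h1, if_neg h2]
      omega
    · by_cases hf : e.1 ≠ i₀ ∧ e.2 ≠ i₀ + 1
      · -- far case : need at least two maximal edges
        have h1 : ¬ isShort (ρ i₀) i₀ := by
          rw [hρi₀]; intro hc; exact hf.1 (by rw [hc])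
        have h2 : isFar (ρ i₀) i₀ := by
          rw [hρi₀]; exact ⟨hcov₀, hf.1, hf.2⟩
        rw [if_neg h1, if_pos h2]
        obtain ⟨g₁, hg₁M, hg₁⟩ := hget e.1 (le_refl _) (by omega) (by omega)
        obtain ⟨g₂, hg₂M, hg₂⟩ := hget (e.2 - 1) (by omega) (by omega) (by omega)
        have hD1 := factD g₁ hg₁M
        have hD2 := factD g₂ hg₂M
        have hgne : g₁ ≠ g₂ := by
          intro hc; rw [hc] at hg₁ hD1; omega
        have h2card : 2 ≤ M.card := Finset.one_lt_card.mpr ⟨g₁, hg₁M, g₂, hg₂M, hgne⟩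
        omega
      · -- near case : need at least one maximal edge
        have h1 : ¬ isShort (ρ i₀) i₀ := by
          rw [hρi₀]; intro hc
          exact hs ⟨by rw [hc], by rw [hc]⟩
        have h2 : ¬ isFar (ρ i₀) i₀ := by
          rw [hρi₀]; intro hc; exact hf ⟨hc.2.1, hc.2.2⟩
        rw [if_neg h1, if_neg h2]
        -- e.2 - e.1 ≥ 2 in the near case
        have hlong : e.1 + 2 ≤ e.2 := by
          rcases not_and_or.mp hs with h | h <;> rcases not_and_or.mp hf with h' | h' <;> omega
        have : ∃ i, e.1 ≤ i ∧ i < e.2 ∧ i ≠ i₀ := by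
          by_cases h : e.1 = i₀
          · exact ⟨e.1 + 1, by omega, by omega, by omega⟩
          · exact ⟨e.1, le_refl _, by omega, h⟩
        obtain ⟨i, hi1, hi2, hi3⟩ := this
        obtain ⟨g, hgM, _⟩ := hget i hi1 hi2 hi3
        have h1card : 1 ≤ M.card := Finset.card_pos.mpr ⟨g, hgM⟩
        omega

/-- if `T` is a non-crossing spanning tree with `k ≥ 1` uncovered
edges, `S` its set of short edges and `W` its set of far edges (indexed by their
gaps), then `|S| ≥ k` and `|W| ≤ |S| - k`. -/
theorem stmt3 (n : ℕ) (T : Finset Edge) (ρ : ℕ → Edge)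
    (hT : IsNCSpanningTree n T) (hρ : IsRho n T ρ) (hbij : RhoBij n T ρ)
    (hk : 1 ≤ (Uncovered T).card) :
    (Uncovered T).card ≤ ((Finset.range (n - 1)).filter (fun k => isShort (ρ k) k)).card ∧
    ((Finset.range (n - 1)).filter (fun k => isFar (ρ k) k)).card + (Uncovered T).card ≤
      ((Finset.range (n - 1)).filter (fun k => isShort (ρ k) k)).card := by
  obtain ⟨hV, hNC, -⟩ := hT
  have hUT : ∀ u ∈ Uncovered T, u ∈ T ∧ ∀ f ∈ T, f ≠ u → ¬ covers f u := by
    intro u hu; rw [Uncovered, Finset.mem_filter] at hu; exact hu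
  have hdecomp : Finset.range (n - 1) =
      (Uncovered T).biUnion (fun u => Finset.Ico u.1 u.2) := by
    ext i
    simp only [Finset.mem_range, Finset.mem_biUnion, Finset.mem_Ico]
    constructor
    · intro hi
      have hin : i + 1 < n := by omega
      obtain ⟨hmem, hgap, -⟩ := hρ i hin
      obtain ⟨g, hgT, hgc, hmax⟩ := exists_max_cover T (fun g hg => (hV g hg).1) hmem
      refine ⟨g, ?_, ?_⟩
      · rw [Uncovered, Finset.mem_filter]; exact ⟨hgT, hmax⟩
      · unfold covers at hgc; unfold coversGap at hgap; omega
    · rintro ⟨u, hu, h1, h2⟩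
      have := (hV u (hUT u hu).1).2; omega
  have hdisj : ∀ u ∈ Uncovered T, ∀ u' ∈ Uncovered T, u ≠ u' →
      Disjoint (Finset.Ico u.1 u.2) (Finset.Ico u'.1 u'.2) := by
    intro u hu u' hu' hne
    obtain ⟨huT, humax⟩ := hUT u hu
    obtain ⟨hu'T, hu'max⟩ := hUT u' hu'
    have h1 : ¬ covers u u' := hu'max u huT hne
    have h2 : ¬ covers u' u := humax u' hu'T hne.symm
    rcases tri (hNC u huT u' hu'T) with h | h | h | h
    · exact absurd h h1
    · exact absurd h h2
    · rw [Finset.disjoint_left]; intro x hx hx'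
      simp only [Finset.mem_Ico] at hx hx'; omega
    · rw [Finset.disjoint_left]; intro x hx hx'
      simp only [Finset.mem_Ico] at hx hx'; omega
  have hcard : ∀ p : ℕ → Prop, ((Finset.range (n - 1)).filter p).card =
      ∑ u ∈ Uncovered T, ((Finset.Ico u.1 u.2).filter p).card := by
    intro p
    rw [hdecomp, Finset.filter_biUnion]
    exact Finset.card_biUnion (fun u hu u' hu' hne =>
      Finset.disjoint_filter_filter (hdisj u hu u' hu' hne))
  have hML : ∀ u ∈ Uncovered T,
      ((Finset.Ico u.1 u.2).filter (fun i => isFar (ρ i) i)).card + 1 ≤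
      ((Finset.Ico u.1 u.2).filter (fun i => isShort (ρ i) i)).card :=
    fun u hu => main_lemma n T ρ hV hNC hρ hbij (elen u) u (hUT u hu).1 le_rfl
  have key : (∑ u ∈ Uncovered T, ((Finset.Ico u.1 u.2).filter (fun i => isFar (ρ i) i)).card)
      + (Uncovered T).card ≤
      ∑ u ∈ Uncovered T, ((Finset.Ico u.1 u.2).filter (fun i => isShort (ρ i) i)).card := by
    calc _ = ∑ u ∈ Uncovered T,
          (((Finset.Ico u.1 u.2).filter (fun i => isFar (ρ i) i)).card + 1) := by
            rw [Finset.sum_add_distrib, Finset.sum_const, smul_eq_mul, mul_one]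
      _ ≤ _ := Finset.sum_le_sum hML
  rw [hcard (fun k => isShort (ρ k) k), hcard (fun k => isFar (ρ k) k)] at *
  constructor <;> omega


end NCST
end

section
/- The diameter of the flip graph of non-crossing spanning trees on n points in convex position is monotone in n: for all n ≥ 1, diam(F_n) ≤ diam(F_{n+1}). -/
/- Non-crossing spanning trees on linearly ordered points p_0, ..., p_{n-1}.
An edge is a pair (a, b) of indices with a < b < n.
Gap k (for k + 1 < n) lies between points k and k+1. -/

namespace NCST

attribute [local instance] Classical.propDecidable

/-- Non-crossing spanning trees on `n` points in convex position (labeled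
circularly; crossing of chords is interleaving of labels). -/
def ConvexTree (n : ℕ) := {E : Finset Edge // IsNCSpanningTree n E}

/-- The flip graph `F_n`: two trees are adjacent iff they differ in exactly one edge. -/
def flipGraph (n : ℕ) : SimpleGraph (ConvexTree n) :=
  SimpleGraph.fromRel (fun T T' => (T.1 \ T'.1).card = 1 ∧ (T'.1 \ T.1).card = 1)

/-- The diameter of the flip graph `F_n`. -/
noncomputable def flipDiam (n : ℕ) : ℕ∞ :=
  ⨆ T : ConvexTree n, ⨆ T' : ConvexTree n, (flipGraph n).edist T T'


open SimpleGraph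


lemma walk_map {V W : Type*} {G : SimpleGraph V} {H : SimpleGraph W} (φ : V → W)
    (hφ : ∀ a b, G.Adj a b → H.Adj (φ a) (φ b) ∨ φ a = φ b) {u v : V} (p : G.Walk u v) :
    ∃ q : H.Walk (φ u) (φ v), q.length ≤ p.length := by
  induction p with
  | nil => exact ⟨.nil, le_rfl⟩
  | cons h p ih =>
    obtain ⟨q, hq⟩ := ih
    rcases hφ _ _ h with h' | h'
    · exact ⟨.cons h' q, by simpa using hq⟩
    · refine ⟨q.copy h'.symm rfl, ?_⟩
      rw [Walk.length_copy, Walk.length_cons]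
      exact Nat.le_succ_of_le hq

lemma edist_map {V W : Type*} {G : SimpleGraph V} {H : SimpleGraph W} (φ : V → W)
    (hφ : ∀ a b, G.Adj a b → H.Adj (φ a) (φ b) ∨ φ a = φ b) (u v : V) :
    H.edist (φ u) (φ v) ≤ G.edist u v := by
  by_cases htop : G.edist u v = ⊤
  · simp [htop]
  obtain ⟨p, hp⟩ := exists_walk_of_edist_ne_top htop
  obtain ⟨q, hq⟩ := walk_map φ hφ p
  calc H.edist (φ u) (φ v) ≤ q.length := edist_le q
    _ ≤ (p.length : ℕ∞) := by exact_mod_cast hq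
    _ = G.edist u v := hp

lemma reach_map {V W : Type*} {G : SimpleGraph V} {H : SimpleGraph W} (φ : V → W)
    (hφ : ∀ a b, G.Adj a b → H.Reachable (φ a) (φ b)) {u v : V} (h : G.Reachable u v) :
    H.Reachable (φ u) (φ v) := by
  obtain ⟨p⟩ := h
  induction p with
  | nil => exact Reachable.refl _
  | cons h p ih => exact (hφ _ _ h).trans ih

lemma isTree_of_connected_of_card_aux {V : Type*} [Fintype V] :
    ∀ (k : ℕ) (G : SimpleGraph V) [Fintype G.edgeSet], G.edgeFinset.card = k →
    G.Connected → G.edgeFinset.card + 1 ≤ Fintype.card V → G.IsTree := by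
  intro k
  induction k using Nat.strong_induction_on with
  | _ k ih =>
    intro G _ hk hc hcard
    by_cases hac : G.IsAcyclic
    · exact ⟨hc, hac⟩
    rw [IsAcyclic] at hac
    push_neg at hac
    obtain ⟨v, c, hcyc⟩ := hac
    cases c with
    | nil => exact absurd hcyc (by simp [Walk.isCycle_def])
    | @cons _ w _ hadj p =>
      have hmem : s(v, w) ∈ (Walk.cons hadj p).edges := by simp
      have hreach : (G \ fromEdgeSet {s(v, w)}).Reachable v w :=
        (adj_and_reachable_delete_edges_iff_exists_cycle.mpr ⟨v, _, hcyc, hmem⟩).2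
      set G' := G \ fromEdgeSet {s(v, w)} with hG'
      have hconn : G'.Connected := by
        have hpre : G'.Preconnected := by
          intro x y
          refine reach_map (G := G) (H := G') id ?_ (hc.preconnected x y)
          intro a b hab
          by_cases he : s(a, b) = s(v, w)
          · rw [Sym2.eq_iff] at he
            rcases he with ⟨rfl, rfl⟩ | ⟨rfl, rfl⟩
            · exact hreach
            · exact hreach.symm
          · refine SimpleGraph.Adj.reachable ?_
            rw [hG', sdiff_adj]
            refine ⟨hab, ?_⟩
            simp only [fromEdgeSet_adj, Set.mem_singleton_iff]
            exact fun hh => he hh.1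
        have := hc.nonempty
        exact ⟨hpre⟩
      have hES : G'.edgeSet = G.edgeSet \ {s(v, w)} := by
        rw [hG', edgeSet_sdiff, edgeSet_fromEdgeSet, edgeSet_sdiff_sdiff_isDiag]
      have hedge : G'.edgeFinset = G.edgeFinset.erase s(v, w) := by
        ext x
        have hx : x ∈ G'.edgeSet ↔ x ∈ G.edgeSet \ {s(v, w)} := by rw [hES]
        simp only [Set.mem_diff, Set.mem_singleton_iff] at hx
        simp only [mem_edgeFinset, Finset.mem_erase]
        rw [hx]
        tauto
      have hmemF : s(v, w) ∈ G.edgeFinset := by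
        rw [mem_edgeFinset]
        exact hadj
      have hcard' : G'.edgeFinset.card = k - 1 := by
        rw [hedge, Finset.card_erase_of_mem hmemF, hk]
      have hkpos : 1 ≤ k := by
        rw [← hk]
        exact Finset.card_pos.mpr ⟨_, hmemF⟩
      have htree' : G'.IsTree := by
        refine ih (k-1) (by omega) G' hcard' hconn ?_
        rw [hcard']
        omega
      have := htree'.card_edgeFinset
      rw [hcard'] at this
      omega

lemma isTree_of_connected_of_card {V : Type*} [Fintype V] (G : SimpleGraph V)
    [Fintype G.edgeSet] (hc : G.Connected) (hcard : G.edgeFinset.card + 1 ≤ Fintype.card V) :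
    G.IsTree :=
  isTree_of_connected_of_card_aux _ G rfl hc hcard

lemma walk_ivt {V : Type*} {G : SimpleGraph V} (f : V → ℕ) (k : ℕ) :
    ∀ {u v : V} (w : G.Walk u v), f v ≤ k → k ≤ f u →
    (∃ x ∈ w.support, f x = k) ∨ (∃ x y, G.Adj x y ∧ f y < k ∧ k < f x) := by
  intro u v w
  induction w with
  | nil =>
    intro h1 h2
    exact Or.inl ⟨_, Walk.start_mem_support _, le_antisymm h1 h2⟩
  | @cons a b c h p ih =>
    intro h1 h2
    rcases eq_or_lt_of_le h2 with he | hlt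
    · exact Or.inl ⟨a, by simp, he.symm⟩
    · rcases le_or_gt (f b) k with h3 | h3
      · rcases eq_or_lt_of_le h3 with he | hlt2
        · exact Or.inl ⟨b, by simp, he⟩
        · exact Or.inr ⟨a, b, h, hlt2, hlt⟩
      · rcases ih h1 h3.le with ⟨x, hx, hfx⟩ | hr
        · exact Or.inl ⟨x, by simp [hx], hfx⟩
        · exact Or.inr hr


/-! ### The projection from trees on `n+1` points to trees on `n` points -/

/-- The neighbors of vertex `nn`. -/
noncomputable def nbrs (nn : ℕ) (S : Finset Edge) : Finset ℕ :=
  (S.filter (fun e => e.2 = nn)).image Prod.fst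

/-- The minimal neighbor of vertex `nn`. -/
noncomputable def mnb (nn : ℕ) (S : Finset Edge) : ℕ := WithTop.untopD 0 (nbrs nn S).min

/-- Contract vertex `nn` : keep all edges not at `nn`, and join `0` to every
neighbor of `nn` except the smallest one. -/
noncomputable def proj (nn : ℕ) (S : Finset Edge) : Finset Edge :=
  S.filter (fun e => e.2 ≠ nn) ∪ ((nbrs nn S).erase (mnb nn S)).image (fun a => ((0:ℕ), a))

lemma mem_nbrs {nn a : ℕ} {S : Finset Edge} : a ∈ nbrs nn S ↔ (a, nn) ∈ S := by
  simp only [nbrs, Finset.mem_image, Finset.mem_filter]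
  constructor
  · rintro ⟨⟨x, y⟩, ⟨hm, h2⟩, h1⟩
    simp only at h1 h2
    subst h1; subst h2; exact hm
  · intro h
    exact ⟨(a, nn), ⟨h, rfl⟩, rfl⟩

lemma mem_proj {nn : ℕ} {x : Edge} {S : Finset Edge} :
    x ∈ proj nn S ↔ (x ∈ S ∧ x.2 ≠ nn) ∨
      (∃ a, (a, nn) ∈ S ∧ a ≠ mnb nn S ∧ x = ((0:ℕ), a)) := by
  simp only [proj, Finset.mem_union, Finset.mem_filter, Finset.mem_image, Finset.mem_erase,
    mem_nbrs]
  constructor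
  · rintro (h | ⟨a, ⟨h1, h2⟩, h3⟩)
    · exact Or.inl h
    · exact Or.inr ⟨a, h2, h1, h3.symm⟩
  · rintro (h | ⟨a, h1, h2, h3⟩)
    · exact Or.inl h
    · exact Or.inr ⟨a, ⟨h2, h1⟩, h3.symm⟩

lemma mnb_mem {nn : ℕ} {S : Finset Edge} (h : (nbrs nn S).Nonempty) :
    mnb nn S ∈ nbrs nn S := by
  rw [mnb, ← Finset.coe_min' h, WithTop.untopD_coe]
  exact Finset.min'_mem _ h

lemma mnb_le {nn a : ℕ} {S : Finset Edge} (ha : a ∈ nbrs nn S) : mnb nn S ≤ a := by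
  rw [mnb, ← Finset.coe_min' ⟨a, ha⟩, WithTop.untopD_coe]
  exact Finset.min'_le _ _ ha

lemma adj_graphOf_iff {nn : ℕ} {E : Finset Edge} (hE : ValidEdges nn E) {x y : Fin nn} :
    (graphOf nn E).Adj x y ↔ ((x : ℕ), (y : ℕ)) ∈ E ∨ ((y : ℕ), (x : ℕ)) ∈ E := by
  rw [graphOf, fromRel_adj]
  constructor
  · rintro ⟨-, h⟩; exact h
  · intro h
    refine ⟨?_, h⟩
    rintro rfl
    rcases h with h | h <;> exact absurd (hE _ h).1 (lt_irrefl _)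

lemma card_graphOf {nn : ℕ} (hpos : 0 < nn) {E : Finset Edge} (hE : ValidEdges nn E) :
    (graphOf nn E).edgeFinset.card = E.card := by
  have key : ∀ e ∈ E, e.1 % nn = e.1 ∧ e.2 % nn = e.2 := by
    intro e he
    have h1 := (hE _ he).1
    have h2 := (hE _ he).2
    exact ⟨Nat.mod_eq_of_lt (lt_trans h1 h2), Nat.mod_eq_of_lt h2⟩
  have himg : (graphOf nn E).edgeFinset = E.image (fun e =>
      s((⟨e.1 % nn, Nat.mod_lt _ hpos⟩ : Fin nn), (⟨e.2 % nn, Nat.mod_lt _ hpos⟩ : Fin nn))) := by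
    ext x
    induction x using Sym2.ind with
    | _ a b =>
      simp only [mem_edgeFinset, mem_edgeSet, Finset.mem_image]
      rw [adj_graphOf_iff hE]
      constructor
      · rintro (h | h)
        · refine ⟨_, h, ?_⟩
          rw [Sym2.eq_iff]
          exact Or.inl ⟨Fin.ext (key _ h).1, Fin.ext (key _ h).2⟩
        · refine ⟨_, h, ?_⟩
          rw [Sym2.eq_iff]
          exact Or.inr ⟨Fin.ext (key _ h).1, Fin.ext (key _ h).2⟩
      · rintro ⟨e, he, hs⟩
        rw [Sym2.eq_iff] at hs
        have hek : e = (e.1, e.2) := rfl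
        rcases hs with ⟨ha, hb⟩ | ⟨ha, hb⟩
        · left
          have h1 : (a : ℕ) = e.1 := by rw [← ha]; exact (key _ he).1
          have h2 : (b : ℕ) = e.2 := by rw [← hb]; exact (key _ he).2
          rw [h1, h2, ← hek]; exact he
        · right
          have h1 : (b : ℕ) = e.1 := by rw [← ha]; exact (key _ he).1
          have h2 : (a : ℕ) = e.2 := by rw [← hb]; exact (key _ he).2
          rw [h1, h2, ← hek]; exact he
  rw [himg]
  apply Finset.card_image_of_injOn
  intro e he e' he' hee
  rw [Sym2.eq_iff] at hee
  rcases hee with ⟨ha, hb⟩ | ⟨ha, hb⟩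
  · have h1 := congrArg Fin.val ha
    have h2 := congrArg Fin.val hb
    simp only [(key _ he).1, (key _ he).2, (key _ he').1, (key _ he').2] at h1 h2
    exact Prod.ext h1 h2
  · have h1 := congrArg Fin.val ha
    have h2 := congrArg Fin.val hb
    simp only [(key _ he).1, (key _ he).2, (key _ he').1, (key _ he').2] at h1 h2
    have := (hE _ he).1
    have := (hE _ he').1
    omega

/-- A tree has no triangles and, using non-crossing, no edge `(0,a)` can coexist
with `(a,n)` and `(c,n)` for `c < a`. -/
lemma key {n : ℕ} {S : Finset Edge} (hS : IsNCSpanningTree (n+1) S) {a c : ℕ}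
    (h0a : ((0:ℕ), a) ∈ S) (han : (a, n) ∈ S) (hcn : (c, n) ∈ S) (hca : c < a) : False := by
  obtain ⟨hV, hNC, hT⟩ := hS
  have haltn : a < n := by
    have := (hV _ han).1
    exact this
  have ha0 : 0 < a := Nat.pos_of_ne_zero (by omega)
  rcases Nat.eq_zero_or_pos c with rfl | hc0
  · -- triangle 0, a, n
    have hnn : n < n + 1 := Nat.lt_succ_self n
    have h0 : (0:ℕ) < n + 1 := by omega
    have ha : a < n + 1 := by omega
    set x0 : Fin (n+1) := ⟨0, h0⟩
    set xa : Fin (n+1) := ⟨a, ha⟩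
    set xn : Fin (n+1) := ⟨n, hnn⟩
    have adj0n : (graphOf (n+1) S).Adj x0 xn := (adj_graphOf_iff hV).mpr (Or.inl hcn)
    have adj0a : (graphOf (n+1) S).Adj x0 xa := (adj_graphOf_iff hV).mpr (Or.inl h0a)
    have adjan : (graphOf (n+1) S).Adj xa xn := (adj_graphOf_iff hV).mpr (Or.inl han)
    have hne0a : x0 ≠ xa := by simp [x0, xa, Fin.ext_iff]; omega
    have hne0n : x0 ≠ xn := by simp [x0, xn, Fin.ext_iff]; omega
    have hnean : xa ≠ xn := by simp [xa, xn, Fin.ext_iff]; omega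
    have hp1 : (Walk.cons adj0n Walk.nil).IsPath := by
      simp [Walk.isPath_def, hne0n]
    have hp2 : (Walk.cons adj0a (Walk.cons adjan Walk.nil)).IsPath := by
      simp [Walk.isPath_def, hne0a, hne0n, hnean]
    have := (hT.existsUnique_path x0 xn).unique hp1 hp2
    have hlen := congrArg Walk.length this
    simp [Walk.length_cons] at hlen
  · exact hNC _ h0a _ hcn (Or.inl ⟨hc0, hca, haltn⟩)

lemma nbrs_nonempty {n : ℕ} (hn : 0 < n) {S : Finset Edge}
    (hS : IsNCSpanningTree (n+1) S) : (nbrs n S).Nonempty := by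
  obtain ⟨hV, hNC, hT⟩ := hS
  have hne : (⟨n, Nat.lt_succ_self n⟩ : Fin (n+1)) ≠ ⟨0, by omega⟩ := by
    simp [Fin.ext_iff]; omega
  obtain ⟨p⟩ := hT.isConnected.preconnected ⟨n, Nat.lt_succ_self n⟩ ⟨0, by omega⟩
  obtain ⟨w, hadj, p', -⟩ := Walk.exists_eq_cons_of_ne hne p
  rcases (adj_graphOf_iff hV).mp hadj with h | h
  · exfalso
    have h1 := (hV _ h).1
    have h2 := (hV _ h).2
    simp only [Fin.val_mk] at h1 h2
    have := w.isLt
    omega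
  · exact ⟨(w : ℕ), mem_nbrs.mpr h⟩

lemma proj_valid {n : ℕ} {S : Finset Edge} (hV : ValidEdges (n+1) S) :
    ValidEdges n (proj n S) := by
  intro x hx
  rcases mem_proj.mp hx with ⟨hxS, hx2⟩ | ⟨a, haS, ham, rfl⟩
  · have h1 := (hV _ hxS).1
    have h2 := (hV _ hxS).2
    exact ⟨h1, by omega⟩
  · have h1 := (hV _ haS).1
    have hm : mnb n S ≤ a := mnb_le (mem_nbrs.mpr haS)
    exact ⟨by omega, by omega⟩

lemma proj_nc {n : ℕ} {S : Finset Edge} (hV : ValidEdges (n+1) S) (hNC : NonCrossing S) :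
    NonCrossing (proj n S) := by
  intro x hx y hy hcross
  rcases mem_proj.mp hx with ⟨hxS, hx2⟩ | ⟨a, haS, ham, rfl⟩ <;>
    rcases mem_proj.mp hy with ⟨hyS, hy2⟩ | ⟨b, hbS, hbm, rfl⟩
  · exact hNC _ hxS _ hyS hcross
  · -- x ∈ S kept, y = (0, b)
    rcases hcross with ⟨h1, h2, h3⟩ | ⟨h1, h2, h3⟩
    · omega
    · -- 0 < x.1 ∧ x.1 < b ∧ b < x.2 : x crosses (b, n)
      have hx2' : x.2 < n := by
        have := (hV _ hxS).2; omega
      exact hNC _ hxS _ hbS (Or.inl ⟨h2.le.lt_of_ne (by omega), h3, hx2'⟩)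
  · -- x = (0, a), y ∈ S kept
    rcases hcross with ⟨h1, h2, h3⟩ | ⟨h1, h2, h3⟩
    · -- 0 < y.1 < a < y.2 : y crosses (a, n)
      have hy2' : y.2 < n := by
        have := (hV _ hyS).2; omega
      exact hNC _ hyS _ haS (Or.inl ⟨h2.le.lt_of_ne (by omega), h3, hy2'⟩)
    · omega
  · rcases hcross with ⟨h1, h2, h3⟩ | ⟨h1, h2, h3⟩ <;> omega

lemma down_reach {n : ℕ} (hn : 0 < n) {S : Finset Edge} (hV : ValidEdges (n+1) S)
    {u v : Fin (n+1)} (w : (graphOf (n+1) S).Walk u v) (hw : ∀ x ∈ w.support, (x : ℕ) ≠ n) :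
    (graphOf n (proj n S)).Reachable ⟨(u : ℕ) % n, Nat.mod_lt _ hn⟩
      ⟨(v : ℕ) % n, Nat.mod_lt _ hn⟩ := by
  induction w with
  | nil => exact Reachable.refl _
  | @cons a b c h p ih =>
    have ha : (a:ℕ) ≠ n := hw a (by simp)
    have hb : (b:ℕ) ≠ n := by
      refine hw b ?_
      rw [Walk.support_cons]
      exact List.mem_cons_of_mem _ (Walk.start_mem_support p)
    have ha' : (a:ℕ) < n := by have := a.isLt; omega
    have hb' : (b:ℕ) < n := by have := b.isLt; omega
    refine Reachable.trans (Adj.reachable ?_) (ih (fun x hx => hw x ?_))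
    · rw [adj_graphOf_iff (proj_valid hV)]
      rcases (adj_graphOf_iff hV).mp h with hm | hm
      · left
        simp only [Fin.val_mk, Nat.mod_eq_of_lt ha', Nat.mod_eq_of_lt hb']
        exact mem_proj.mpr (Or.inl ⟨hm, hb⟩)
      · right
        simp only [Fin.val_mk, Nat.mod_eq_of_lt ha', Nat.mod_eq_of_lt hb']
        exact mem_proj.mpr (Or.inl ⟨hm, ha⟩)
    · rw [Walk.support_cons]
      exact List.mem_cons_of_mem _ hx

lemma reach_zero_mnb {n : ℕ} (hn : 0 < n) {S : Finset Edge}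
    (hS : IsNCSpanningTree (n+1) S) :
    (graphOf n (proj n S)).Reachable ⟨0, hn⟩ ⟨mnb n S % n, Nat.mod_lt _ hn⟩ := by
  have hV := hS.1
  have hNC := hS.2.1
  have hT := hS.2.2
  have hAne : (nbrs n S).Nonempty := nbrs_nonempty hn hS
  have hmA : mnb n S ∈ nbrs n S := mnb_mem hAne
  have hmS : (mnb n S, n) ∈ S := mem_nbrs.mp hmA
  have hmn : mnb n S < n := (hV _ hmS).1
  rcases Nat.eq_zero_or_pos (mnb n S) with hm0 | hmpos
  · rw [hm0]
    have he : (⟨0 % n, Nat.mod_lt 0 hn⟩ : Fin n) = ⟨0, hn⟩ := Fin.ext (Nat.zero_mod n)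
    rw [he]
  · have hne : (⟨n, Nat.lt_succ_self n⟩ : Fin (n+1)) ≠ ⟨0, by omega⟩ := by
      simp [Fin.ext_iff]; omega
    obtain ⟨p0⟩ := hT.isConnected.preconnected ⟨n, Nat.lt_succ_self n⟩ ⟨0, by omega⟩
    have hpath : p0.bypass.IsPath := Walk.bypass_isPath p0
    obtain ⟨c, hadj, p', hPeq⟩ := Walk.exists_eq_cons_of_ne hne p0.bypass
    rw [hPeq, Walk.cons_isPath_iff] at hpath
    obtain ⟨hp'path, hnnot⟩ := hpath
    have hcS : ((c:ℕ), n) ∈ S := by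
      rcases (adj_graphOf_iff hV).mp hadj with h | h
      · exfalso
        have h1 := (hV _ h).1
        have h2 := (hV _ h).2
        simp only [Fin.val_mk] at h1 h2
        have := c.isLt
        omega
      · exact h
    have hcA : (c:ℕ) ∈ nbrs n S := mem_nbrs.mpr hcS
    have hcn : (c:ℕ) < n := (hV _ hcS).1
    have havoid : ∀ x ∈ p'.support, (x:ℕ) ≠ n := by
      intro x hx hxn
      have hxeq : x = ⟨n, Nat.lt_succ_self n⟩ := Fin.ext (by simpa using hxn)
      rw [hxeq] at hx
      exact hnnot hx
    have hreach_c0 := down_reach hn hV p' havoid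
    have he0 : (⟨((⟨0, by omega⟩ : Fin (n+1)) : ℕ) % n, Nat.mod_lt _ hn⟩ : Fin n) = ⟨0, hn⟩ :=
      Fin.ext (by simp)
    rw [he0] at hreach_c0
    rcases eq_or_lt_of_le (mnb_le hcA) with hcm | hcm
    · have hec : (⟨(c:ℕ) % n, Nat.mod_lt _ hn⟩ : Fin n) = ⟨mnb n S % n, Nat.mod_lt _ hn⟩ := by
        rw [hcm]
      rw [hec] at hreach_c0
      exact hreach_c0.symm
    · have hivt := walk_ivt (G := graphOf (n+1) S) (fun x => (x:ℕ)) (mnb n S) p'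
        (by simp) hcm.le
      rcases hivt with ⟨x, hxsup, hxm⟩ | ⟨x, y, hxy, h1, h2⟩
      · have hsub := Walk.support_takeUntil_subset p' hxsup
        have havoid' : ∀ z ∈ (p'.takeUntil x hxsup).support, (z:ℕ) ≠ n :=
          fun z hz => havoid z (hsub hz)
        have r1 := down_reach hn hV (p'.takeUntil x hxsup) havoid'
        have hex : (⟨(x:ℕ) % n, Nat.mod_lt _ hn⟩ : Fin n) = ⟨mnb n S % n, Nat.mod_lt _ hn⟩ :=
          Fin.ext (by rw [show (x:ℕ) = mnb n S from hxm])
        rw [hex] at r1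
        exact (r1.symm.trans hreach_c0).symm
      · exfalso
        rcases (adj_graphOf_iff hV).mp hxy with hm' | hm'
        · have := (hV _ hm').1
          simp only at this h1 h2
          omega
        · have hx2 := (hV _ hm').2
          simp only at hx2 h1 h2
          rcases eq_or_lt_of_le (Nat.lt_succ_iff.mp hx2) with hxn | hxn
          · have : (y:ℕ) ∈ nbrs n S := mem_nbrs.mpr (by rwa [hxn] at hm')
            have := mnb_le this
            omega
          · exact hNC _ hm' _ hmS (Or.inl ⟨h1, h2, hxn⟩)

lemma proj_connected {n : ℕ} (hn : 0 < n) {S : Finset Edge}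
    (hS : IsNCSpanningTree (n+1) S) : (graphOf n (proj n S)).Connected := by
  have hV := hS.1
  have : Nonempty (Fin n) := ⟨⟨0, hn⟩⟩
  refine ⟨fun x y => ?_⟩
  have hreach : (graphOf (n+1) S).Reachable ⟨(x:ℕ), by omega⟩ ⟨(y:ℕ), by omega⟩ :=
    hS.2.2.isConnected.preconnected _ _
  have hmap := reach_map (G := graphOf (n+1) S) (H := graphOf n (proj n S))
    (fun v => ⟨(v:ℕ) % n, Nat.mod_lt _ hn⟩) ?_ hreach
  · have hmap' : (graphOf n (proj n S)).Reachable ⟨(x:ℕ) % n, Nat.mod_lt _ hn⟩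
        ⟨(y:ℕ) % n, Nat.mod_lt _ hn⟩ := hmap
    have hx : (⟨(x:ℕ) % n, Nat.mod_lt _ hn⟩ : Fin n) = x :=
      Fin.ext (Nat.mod_eq_of_lt x.isLt)
    have hy : (⟨(y:ℕ) % n, Nat.mod_lt _ hn⟩ : Fin n) = y :=
      Fin.ext (Nat.mod_eq_of_lt y.isLt)
    rwa [hx, hy] at hmap'
  · intro a b hab
    show (graphOf n (proj n S)).Reachable ⟨(a:ℕ) % n, Nat.mod_lt _ hn⟩
      ⟨(b:ℕ) % n, Nat.mod_lt _ hn⟩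
    rcases (adj_graphOf_iff hV).mp hab with hm | hm
    · -- (↑a, ↑b) ∈ S
      have h1 := (hV _ hm).1
      have h2 := (hV _ hm).2
      simp only at h1 h2
      rcases eq_or_lt_of_le (Nat.lt_succ_iff.mp h2) with hbn | hbn
      · -- ↑b = n : a is a neighbor of n
        have haA : (a:ℕ) ∈ nbrs n S := mem_nbrs.mpr (by rwa [hbn] at hm)
        have han : (a:ℕ) < n := by omega
        have hbmod : (⟨(b:ℕ) % n, Nat.mod_lt _ hn⟩ : Fin n) = ⟨0, hn⟩ :=
          Fin.ext (by simp [hbn])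
        rw [hbmod]
        have hamod : (⟨(a:ℕ) % n, Nat.mod_lt _ hn⟩ : Fin n) = ⟨(a:ℕ), han⟩ :=
          Fin.ext (Nat.mod_eq_of_lt han)
        rw [hamod]
        by_cases ham : (a:ℕ) = mnb n S
        · have := reach_zero_mnb hn hS
          have hmm : (⟨mnb n S % n, Nat.mod_lt _ hn⟩ : Fin n) = ⟨(a:ℕ), han⟩ :=
            Fin.ext (by simp only [Fin.val_mk]; rw [← ham, Nat.mod_eq_of_lt han])
          rw [hmm] at this
          exact this.symm
        · refine (Adj.reachable ?_).symm
          rw [adj_graphOf_iff (proj_valid hV)]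
          left
          exact mem_proj.mpr (Or.inr ⟨(a:ℕ), (by rwa [hbn] at hm), ham, rfl⟩)
      · -- ↑b < n : kept edge
        refine Adj.reachable ?_
        rw [adj_graphOf_iff (proj_valid hV)]
        left
        simp only [Fin.val_mk, Nat.mod_eq_of_lt (by omega : (a:ℕ) < n), Nat.mod_eq_of_lt hbn]
        exact mem_proj.mpr (Or.inl ⟨hm, by omega⟩)
    · -- (↑b, ↑a) ∈ S : symmetric
      have h1 := (hV _ hm).1
      have h2 := (hV _ hm).2
      simp only at h1 h2
      rcases eq_or_lt_of_le (Nat.lt_succ_iff.mp h2) with hbn | hbn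
      · have hbA : (b:ℕ) ∈ nbrs n S := mem_nbrs.mpr (by rwa [hbn] at hm)
        have hbn' : (b:ℕ) < n := by omega
        have hamod : (⟨(a:ℕ) % n, Nat.mod_lt _ hn⟩ : Fin n) = ⟨0, hn⟩ :=
          Fin.ext (by simp [hbn])
        rw [hamod]
        have hbmod : (⟨(b:ℕ) % n, Nat.mod_lt _ hn⟩ : Fin n) = ⟨(b:ℕ), hbn'⟩ :=
          Fin.ext (Nat.mod_eq_of_lt hbn')
        rw [hbmod]
        by_cases hbm : (b:ℕ) = mnb n S
        · have := reach_zero_mnb hn hS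
          have hmm : (⟨mnb n S % n, Nat.mod_lt _ hn⟩ : Fin n) = ⟨(b:ℕ), hbn'⟩ :=
            Fin.ext (by simp only [Fin.val_mk]; rw [← hbm, Nat.mod_eq_of_lt hbn'])
          rw [hmm] at this
          exact this
        · refine Adj.reachable ?_
          rw [adj_graphOf_iff (proj_valid hV)]
          left
          exact mem_proj.mpr (Or.inr ⟨(b:ℕ), (by rwa [hbn] at hm), hbm, rfl⟩)
      · refine Adj.reachable ?_
        rw [adj_graphOf_iff (proj_valid hV)]
        right
        simp only [Fin.val_mk, Nat.mod_eq_of_lt (by omega : (b:ℕ) < n), Nat.mod_eq_of_lt hbn]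
        exact mem_proj.mpr (Or.inl ⟨hm, by omega⟩)

lemma tree_card {n : ℕ} {S : Finset Edge} (hS : IsNCSpanningTree (n+1) S) : S.card = n := by
  have h := hS.2.2.card_edgeFinset
  rw [card_graphOf (Nat.succ_pos n) hS.1, Fintype.card_fin] at h
  omega

lemma proj_card {n : ℕ} (hn : 0 < n) {S : Finset Edge}
    (hS : IsNCSpanningTree (n+1) S) : (proj n S).card + 1 = n := by
  have hV := hS.1
  have hAne : (nbrs n S).Nonempty := nbrs_nonempty hn hS
  have hmA : mnb n S ∈ nbrs n S := mnb_mem hAne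
  have hdisj : Disjoint (S.filter (fun e => e.2 ≠ n))
      (((nbrs n S).erase (mnb n S)).image (fun a => ((0:ℕ), a))) := by
    rw [Finset.disjoint_left]
    rintro x hx1 hx2
    obtain ⟨hxS, -⟩ := Finset.mem_filter.mp hx1
    obtain ⟨a, ha, rfl⟩ := Finset.mem_image.mp hx2
    obtain ⟨ham, haA⟩ := Finset.mem_erase.mp ha
    exact key hS hxS (mem_nbrs.mp haA) (mem_nbrs.mp hmA)
      ((mnb_le haA).lt_of_ne (Ne.symm ham))
  have hcard1 : (S.filter (fun e => e.2 = n)).card + (S.filter (fun e => e.2 ≠ n)).card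
      = S.card := Finset.card_filter_add_card_filter_not _
  have hnbrs_card : (nbrs n S).card = (S.filter (fun e => e.2 = n)).card := by
    rw [nbrs]
    apply Finset.card_image_of_injOn
    intro e he e' he' hee
    have h2 := (Finset.mem_filter.mp he).2
    have h2' := (Finset.mem_filter.mp he').2
    exact Prod.ext hee (by rw [h2, h2'])
  have himg_card : (((nbrs n S).erase (mnb n S)).image (fun a => ((0:ℕ), a))).card
      = (nbrs n S).card - 1 := by
    rw [Finset.card_image_of_injective _ (fun a b hab => (Prod.mk.injEq _ _ _ _).mp hab |>.2),
      Finset.card_erase_of_mem hmA]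
  have hpos : 1 ≤ (nbrs n S).card := Finset.card_pos.mpr hAne
  have hScard : S.card = n := tree_card hS
  have hfle : (S.filter (fun e => e.2 = n)).card ≤ S.card := Finset.card_filter_le _ _
  rw [proj, Finset.card_union_of_disjoint hdisj, himg_card, hnbrs_card]
  omega

lemma proj_tree {n : ℕ} (hn : 0 < n) {S : Finset Edge}
    (hS : IsNCSpanningTree (n+1) S) : IsNCSpanningTree n (proj n S) := by
  refine ⟨proj_valid hS.1, proj_nc hS.1 hS.2.1, ?_⟩
  refine isTree_of_connected_of_card _ (proj_connected hn hS) ?_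
  rw [card_graphOf hn (proj_valid hS.1), Fintype.card_fin, proj_card hn hS]

lemma plus_tree {n : ℕ} (hn : 0 < n) {T : Finset Edge} (hT : IsNCSpanningTree n T) :
    IsNCSpanningTree (n+1) (insert ((0:ℕ), n) T) := by
  obtain ⟨hV, hNC, htree⟩ := hT
  have hnotin : ((0:ℕ), n) ∉ T := fun h => absurd (hV _ h).2 (lt_irrefl n)
  have hV' : ValidEdges (n+1) (insert ((0:ℕ), n) T) := by
    intro e he
    rcases Finset.mem_insert.mp he with rfl | he
    · exact ⟨hn, Nat.lt_succ_self n⟩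
    · have := hV _ he
      exact ⟨this.1, by omega⟩
  refine ⟨hV', ?_, ?_⟩
  · intro e he f hf hcross
    rcases Finset.mem_insert.mp he with rfl | he <;>
      rcases Finset.mem_insert.mp hf with rfl | hf
    · rcases hcross with ⟨h1, -⟩ | ⟨h1, -⟩ <;> omega
    · have := (hV _ hf).2
      rcases hcross with ⟨h1, h2, h3⟩ | ⟨h1, h2, h3⟩ <;> omega
    · have := (hV _ he).2
      rcases hcross with ⟨h1, h2, h3⟩ | ⟨h1, h2, h3⟩ <;> omega
    · exact hNC _ he _ hf hcross
  · refine isTree_of_connected_of_card _ ?_ ?_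
    · have : Nonempty (Fin (n+1)) := ⟨⟨0, by omega⟩⟩
      refine ⟨fun x y => ?_⟩
      have hstep : ∀ z : Fin (n+1),
          (graphOf (n+1) (insert ((0:ℕ), n) T)).Reachable z ⟨0, by omega⟩ := by
        intro z
        rcases eq_or_lt_of_le (Nat.lt_succ_iff.mp z.isLt) with hzn | hzn
        · refine Adj.reachable ?_
          rw [adj_graphOf_iff hV']
          right
          simp only [Fin.val_mk, hzn]
          exact Finset.mem_insert_self _ _
        · have hr : (graphOf n T).Reachable ⟨(z:ℕ), hzn⟩ ⟨0, hn⟩ :=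
            htree.isConnected.preconnected _ _
          have := reach_map (G := graphOf n T) (H := graphOf (n+1) (insert ((0:ℕ), n) T))
            (fun v => ⟨(v:ℕ), by omega⟩) ?_ hr
          · exact this
          · intro a b hab
            refine Adj.reachable ?_
            rw [adj_graphOf_iff hV']
            rcases (adj_graphOf_iff hV).mp hab with hm | hm
            · exact Or.inl (Finset.mem_insert_of_mem hm)
            · exact Or.inr (Finset.mem_insert_of_mem hm)
      exact (hstep x).trans (hstep y).symm
    · rw [card_graphOf (Nat.succ_pos n) hV', Fintype.card_fin,
        Finset.card_insert_of_notMem hnotin]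
      have h := htree.card_edgeFinset
      rw [card_graphOf hn hV, Fintype.card_fin] at h
      omega

lemma plus_proj {n : ℕ} {T : Finset Edge} (hV : ValidEdges n T) :
    proj n (insert ((0:ℕ), n) T) = T := by
  have hTn : ∀ e ∈ T, e.2 ≠ n := fun e he => Nat.ne_of_lt (hV _ he).2
  have hnbrs : nbrs n (insert ((0:ℕ), n) T) = {0} := by
    ext a
    rw [mem_nbrs, Finset.mem_singleton, Finset.mem_insert]
    constructor
    · rintro (h | h)
      · exact (Prod.mk.injEq _ _ _ _).mp h |>.1
      · exact absurd rfl (hTn _ h)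
    · rintro rfl
      exact Or.inl rfl
  have hmnb : mnb n (insert ((0:ℕ), n) T) = 0 := by
    have : mnb n (insert ((0:ℕ), n) T) ∈ nbrs n (insert ((0:ℕ), n) T) :=
      mnb_mem (by rw [hnbrs]; exact ⟨0, Finset.mem_singleton_self 0⟩)
    rw [hnbrs, Finset.mem_singleton] at this
    exact this
  rw [proj, hnbrs, hmnb]
  simp only [Finset.erase_singleton, Finset.image_empty, Finset.union_empty]
  ext x
  rw [Finset.mem_filter, Finset.mem_insert]
  constructor
  · rintro ⟨rfl | hx, h2⟩
    · exact absurd rfl h2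
    · exact hx
  · intro hx
    exact ⟨Or.inr hx, hTn _ hx⟩

lemma proj_diff_subsingleton {n : ℕ} (hn : 0 < n) {S S' : Finset Edge}
    (hS : IsNCSpanningTree (n+1) S) (hS' : IsNCSpanningTree (n+1) S')
    {e : Edge} (hd : S \ S' = {e}) :
    ∀ x ∈ proj n S \ proj n S',
      x = (if e.2 = n then
            (if e.1 = mnb n S then ((0:ℕ), mnb n S') else ((0:ℕ), e.1))
          else e) := by
  intro x hx
  obtain ⟨hxP, hxP'⟩ := Finset.mem_sdiff.mp hx
  have hnotP' := fun h => hxP' h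
  rcases mem_proj.mp hxP with ⟨hxS, hx2⟩ | ⟨c, hcS, hcm, rfl⟩
  · -- kept edge
    have hxS' : x ∉ S' := by
      intro hxS'
      exact hxP' (mem_proj.mpr (Or.inl ⟨hxS', hx2⟩))
    have hxe : x = e := by
      have : x ∈ S \ S' := Finset.mem_sdiff.mpr ⟨hxS, hxS'⟩
      rw [hd, Finset.mem_singleton] at this
      exact this
    subst hxe
    rw [if_neg hx2]
  · -- star edge (0, c)
    by_cases hcS' : (c, n) ∈ S'
    · -- then c must be the new minimum
      have hcm' : c = mnb n S' := by
        by_contra hne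
        exact hxP' (mem_proj.mpr (Or.inr ⟨c, hcS', hne, rfl⟩))
      -- the old minimum edge must have left
      have hAne : (nbrs n S).Nonempty := ⟨c, mem_nbrs.mpr hcS⟩
      have hmS : (mnb n S, n) ∈ S := mem_nbrs.mp (mnb_mem hAne)
      have hmnotS' : (mnb n S, n) ∉ S' := by
        intro hmem
        have h1 : mnb n S' ≤ mnb n S := mnb_le (mem_nbrs.mpr hmem)
        have h2 : mnb n S ≤ c := mnb_le (mem_nbrs.mpr hcS)
        rw [← hcm'] at h1
        exact hcm (le_antisymm h2 h1).symm
      have hme : (mnb n S, n) = e := by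
        have : (mnb n S, n) ∈ S \ S' := Finset.mem_sdiff.mpr ⟨hmS, hmnotS'⟩
        rw [hd, Finset.mem_singleton] at this
        exact this
      rw [← hme, hcm']
      simp
    · -- (c, n) left : e = (c, n)
      have hce : (c, n) = e := by
        have : (c, n) ∈ S \ S' := Finset.mem_sdiff.mpr ⟨hcS, hcS'⟩
        rw [hd, Finset.mem_singleton] at this
        exact this
      rw [← hce]
      simp [hcm]

lemma proj_flip {n : ℕ} (hn : 0 < n) {S S' : Finset Edge}
    (hS : IsNCSpanningTree (n+1) S) (hS' : IsNCSpanningTree (n+1) S')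
    (h1 : (S \ S').card = 1) (h2 : (S' \ S).card = 1) :
    proj n S = proj n S' ∨
      ((proj n S \ proj n S').card = 1 ∧ (proj n S' \ proj n S).card = 1) := by
  obtain ⟨e, he⟩ := Finset.card_eq_one.mp h1
  obtain ⟨f, hf⟩ := Finset.card_eq_one.mp h2
  have hsub1 := proj_diff_subsingleton hn hS hS' he
  have hsub2 := proj_diff_subsingleton hn hS' hS hf
  have hc1 : (proj n S \ proj n S').card ≤ 1 := by
    refine Finset.card_le_one.mpr fun a ha b hb => ?_
    rw [hsub1 a ha, hsub1 b hb]
  have hc2 : (proj n S' \ proj n S).card ≤ 1 := by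
    refine Finset.card_le_one.mpr fun a ha b hb => ?_
    rw [hsub2 a ha, hsub2 b hb]
  have hcards : (proj n S).card = (proj n S').card := by
    have := proj_card hn hS
    have := proj_card hn hS'
    omega
  have heq : (proj n S \ proj n S').card = (proj n S' \ proj n S).card := by
    have e1 := Finset.card_sdiff_add_card_inter (proj n S) (proj n S')
    have e2 := Finset.card_sdiff_add_card_inter (proj n S') (proj n S)
    rw [Finset.inter_comm] at e2
    omega
  rcases Nat.eq_zero_or_pos (proj n S \ proj n S').card with h0 | hpos
  · left
    have hs1 : proj n S ⊆ proj n S' := by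
      rw [← Finset.sdiff_eq_empty_iff_subset]
      exact Finset.card_eq_zero.mp h0
    have hs2 : proj n S' ⊆ proj n S := by
      rw [← Finset.sdiff_eq_empty_iff_subset]
      exact Finset.card_eq_zero.mp (by omega)
    exact Finset.Subset.antisymm hs1 hs2
  · right
    omega

theorem stmt6' (n : ℕ) (hn : 1 ≤ n) : flipDiam n ≤ flipDiam (n + 1) := by
  have hn0 : 0 < n := hn
  have hΨtree : ∀ S : ConvexTree (n+1), IsNCSpanningTree n (proj n S.1) :=
    fun S => proj_tree hn0 S.2
  have hΦtree : ∀ T : ConvexTree n, IsNCSpanningTree (n+1) (insert ((0:ℕ), n) T.1) :=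
    fun T => plus_tree hn0 T.2
  set Φ : ConvexTree n → ConvexTree (n+1) := fun T => ⟨insert ((0:ℕ), n) T.1, hΦtree T⟩
    with hΦ
  set Ψ : ConvexTree (n+1) → ConvexTree n := fun S => ⟨proj n S.1, hΨtree S⟩ with hΨ
  have hΨΦ : ∀ T, Ψ (Φ T) = T := fun T => Subtype.ext (plus_proj T.2.1)
  have hlip : ∀ A B : ConvexTree (n+1), (flipGraph (n+1)).Adj A B →
      (flipGraph n).Adj (Ψ A) (Ψ B) ∨ Ψ A = Ψ B := by
    intro A B hadj
    rw [flipGraph, fromRel_adj] at hadj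
    have hcards : (A.1 \ B.1).card = 1 ∧ (B.1 \ A.1).card = 1 := by
      rcases hadj.2 with h | h
      · exact h
      · exact ⟨h.2, h.1⟩
    rcases proj_flip hn0 A.2 B.2 hcards.1 hcards.2 with h | h
    · right
      exact Subtype.ext h
    · left
      rw [flipGraph, fromRel_adj]
      refine ⟨?_, Or.inl h⟩
      intro hEq
      have hinj : proj n A.1 = proj n B.1 := congrArg Subtype.val hEq
      rw [hinj] at h
      simp at h
  rw [flipDiam, flipDiam]
  refine iSup_le fun T => iSup_le fun T' => ?_
  have h1 : (flipGraph n).edist T T' ≤ (flipGraph (n+1)).edist (Φ T) (Φ T') := by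
    have := edist_map Ψ hlip (Φ T) (Φ T')
    rwa [hΨΦ, hΨΦ] at this
  refine h1.trans ?_
  refine le_trans ?_ (le_iSup _ (Φ T))
  exact le_iSup (fun B => (flipGraph (n+1)).edist (Φ T) B) (Φ T')

/-- the diameter of the flip graph of non-crossing spanning trees
on `n` points in convex position is monotone in `n`. -/
theorem stmt6 (n : ℕ) (hn : 1 ≤ n) : flipDiam n ≤ flipDiam (n + 1) := stmt6' n hn

end NCST
end

section
/- Let T, T' be two non-crossing spanning trees on linearly ordered points p_1,...,p_n, and let A be the set of near-near gaps g_i whose paired edges e_i ∈ T and e'_i ∈ T' are adjacent (share an endpoint) with e_i longer than e'_i. Then the induced subgraph H[A] of the conflict graph H(T,T') is acyclic. -/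
/- Non-crossing spanning trees on linearly ordered points p_0, ..., p_{n-1}.
An edge is a pair (a, b) of indices with a < b < n.
Gap k (for k + 1 < n) lies between points k and k+1. -/

namespace NCST

attribute [local instance] Classical.propDecidable

/-- For a gap `k` in the set `A`, the two paired edges share their near endpoint:
either both are left-anchored at `k`, or both are right-anchored at `k+1`. -/
lemma shape_lemma (n : ℕ) (ρ ρ' : ℕ → Edge) (k : ℕ)
    (h : NearNear n ρ ρ' k ∧ adjEdges (ρ k) (ρ' k) ∧ elen (ρ' k) < elen (ρ k)) :
    ((ρ k).1 = k ∧ (ρ' k).1 = k ∧ k + 1 < (ρ' k).2 ∧ (ρ' k).2 < (ρ k).2) ∨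
    ((ρ k).2 = k + 1 ∧ (ρ' k).2 = k + 1 ∧ (ρ k).1 < (ρ' k).1 ∧ (ρ' k).1 < k) := by
  obtain ⟨⟨hk, hne, hnear, hnear'⟩, hadj, hlen⟩ := h
  simp only [isNear, coversGap, adjEdges, elen] at hnear hnear' hadj hlen
  omega

/-- Key lemma: a conflict edge between gaps of `A` strictly increases `elen ∘ ρ`. -/
lemma key_lemma (n : ℕ) (T : Finset Edge) (ρ ρ' : ℕ → Edge)
    (hTnc : NonCrossing T) (hρ : IsRho n T ρ) {i j : ℕ}
    (hi : NearNear n ρ ρ' i ∧ adjEdges (ρ i) (ρ' i) ∧ elen (ρ' i) < elen (ρ i))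
    (hj : NearNear n ρ ρ' j ∧ adjEdges (ρ j) (ρ' j) ∧ elen (ρ' j) < elen (ρ j))
    (hc : conflictEdge ρ ρ' i j) : elen (ρ i) < elen (ρ j) := by
  have si := shape_lemma n ρ ρ' i hi
  have sj := shape_lemma n ρ ρ' j hj
  have hi1 : i + 1 < n := hi.1.1
  have hj1 : j + 1 < n := hj.1.1
  have hei : ρ i ∈ T := (hρ i hi1).1
  have hej : ρ j ∈ T := (hρ j hj1).1
  have hnc : ¬ crosses (ρ i) (ρ j) := hTnc _ hei _ hej
  have hmin : (ρ i).1 ≤ j → j + 1 ≤ (ρ i).2 → elen (ρ j) ≤ elen (ρ i) :=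
    fun h1 h2 => (hρ j hj1).2.2 _ hei ⟨h1, h2⟩
  obtain ⟨hne, hcc⟩ := hc
  simp only [crosses, covers, coversGap, elen] at hnc hcc hmin ⊢
  omega

/-- the subgraph of the conflict graph `H(T,T')` induced on the set
`A` of near-near gaps whose paired edges are adjacent with `e_i` longer than
`e'_i` is acyclic. -/
theorem stmt7 (n : ℕ) (T T' : Finset Edge) (ρ ρ' : ℕ → Edge)
    (hT : IsNCSpanningTree n T) (hT' : IsNCSpanningTree n T')
    (hρ : IsRho n T ρ) (hbij : RhoBij n T ρ)
    (hρ' : IsRho n T' ρ') (hbij' : RhoBij n T' ρ') :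
    AcyclicOn (conflictEdge ρ ρ')
      {i | NearNear n ρ ρ' i ∧ adjEdges (ρ i) (ρ' i) ∧ elen (ρ' i) < elen (ρ i)} := by
  intro a hcyc
  set S : Set ℕ :=
    {i | NearNear n ρ ρ' i ∧ adjEdges (ρ i) (ρ' i) ∧ elen (ρ' i) < elen (ρ i)} with hS
  have key' : ∀ x y, (x ∈ S ∧ y ∈ S ∧ conflictEdge ρ ρ' x y) →
      elen (ρ x) < elen (ρ y) := by
    intro x y h
    exact key_lemma n T ρ ρ' hT.2.1 hρ h.1 h.2.1 h.2.2
  have mono : ∀ b, Relation.TransGen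
      (fun x y => x ∈ S ∧ y ∈ S ∧ conflictEdge ρ ρ' x y) a b →
      elen (ρ a) < elen (ρ b) := by
    intro b h
    induction h with
    | single h => exact key' _ _ h
    | tail _ h ih => exact lt_trans ih (key' _ _ h)
  exact lt_irrefl _ (mono a hcyc)

end NCST
end

section
/- Let T, T' be two non-crossing spanning trees on linearly ordered points p_1,...,p_n with conflict graph H = H(T,T'). Then the vertex set of H can be partitioned into three sets A, B, C such that each induces an acyclic subgraph of H. In particular, H has an acyclic induced subgraph on at least |V(H)|/3 vertices, i.e., ac(H) ≥ |V(H)|/3. -/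
/- Non-crossing spanning trees on linearly ordered points p_0, ..., p_{n-1}.
An edge is a pair (a, b) of indices with a < b < n.
Gap k (for k + 1 < n) lies between points k and k+1. -/

namespace NCST

attribute [local instance] Classical.propDecidable

/-- Any edge of `E` covering gap `k` covers the shortest such edge `ρ k`. -/
lemma rho_covers {n : ℕ} {E : Finset Edge} {ρ : ℕ → Edge} (hnc : NonCrossing E)
    (hρ : IsRho n E ρ) {k : ℕ} (hk : k + 1 < n) {f : Edge} (hf : f ∈ E)
    (hcov : coversGap f k) : covers f (ρ k) := by
  obtain ⟨hmem, hcg, hmin⟩ := hρ k hk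
  have hx := hnc f hf (ρ k) hmem
  have hl := hmin f hf hcov
  simp only [crosses, coversGap, covers, elen, not_or, not_and, not_lt] at *
  omega

/-- A relation admitting a strictly increasing potential on `S` is acyclic on `S`. -/
lemma acyclicOn_of_mono {α : Type*} [Preorder α] (R : ℕ → ℕ → Prop) (S : Set ℕ) (μ : ℕ → α)
    (h : ∀ x ∈ S, ∀ y ∈ S, R x y → μ x < μ y) : AcyclicOn R S := by
  intro a ha
  have key : ∀ b c : ℕ, Relation.TransGen (fun x y => x ∈ S ∧ y ∈ S ∧ R x y) b c →
      μ b < μ c := by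
    intro b c htg
    induction htg with
    | single h' => exact h _ h'.1 _ h'.2.1 h'.2.2
    | tail _ h' ih => exact ih.trans (h _ h'.1 _ h'.2.1 h'.2.2)
  exact absurd (key a a ha) (lt_irrefl _)

set_option maxHeartbeats 1600000 in
lemma localA (i j : ℕ) (e ep f fp : Edge)
    (hij : i ≠ j)
    (hni : isNear e i) (hnpi : isNear ep i) (hnj : isNear f j) (hnpj : isNear fp j)
    (hAi : (e.1 = i ↔ ep.1 = i) ∧ elen ep < elen e)
    (hAj : (f.1 = j ↔ fp.1 = j) ∧ elen fp < elen f)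
    (hnc : ¬ crosses e f)
    (hconf : crosses e fp ∨ (covers fp e ∧ coversGap e j) ∨ (covers e fp ∧ coversGap fp i)) :
    elen e < elen f := by
  obtain ⟨e0, e1⟩ := e
  obtain ⟨a0, a1⟩ := ep
  obtain ⟨f0, f1⟩ := f
  obtain ⟨b0, b1⟩ := fp
  simp only [isNear, coversGap, covers, crosses, elen, ne_eq, not_or, not_and, not_lt] at *
  obtain ⟨⟨hni1, hni2⟩, hni3 | hni3⟩ := hni <;>
  obtain ⟨⟨hnpi1, hnpi2⟩, hnpi3 | hnpi3⟩ := hnpi <;>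
  obtain ⟨⟨hnj1, hnj2⟩, hnj3 | hnj3⟩ := hnj <;>
  obtain ⟨⟨hnpj1, hnpj2⟩, hnpj3 | hnpj3⟩ := hnpj <;>
  rcases hconf with h | h | h <;>
  omega

set_option maxHeartbeats 1600000 in
lemma localB (i j : ℕ) (e ep f fp : Edge)
    (hij : i ≠ j)
    (hni : isNear e i) (hnpi : isNear ep i) (hnj : isNear f j) (hnpj : isNear fp j)
    (hef : e ≠ f)
    (hBi : ep.2 = i + 1 ∧ (e.1 = i ∨ elen e ≤ elen ep))
    (hBj : fp.2 = j + 1 ∧ (f.1 = j ∨ elen f ≤ elen fp))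
    (hT1 : coversGap e j → covers e f)
    (hconf : crosses e fp ∨ (covers fp e ∧ coversGap e j) ∨ (covers e fp ∧ coversGap fp i)) :
    e.1 ≤ f.1 ∧ (e.1 = f.1 → f.2 < e.2) := by
  obtain ⟨e0, e1⟩ := e
  obtain ⟨a0, a1⟩ := ep
  obtain ⟨f0, f1⟩ := f
  obtain ⟨b0, b1⟩ := fp
  simp only [isNear, coversGap, covers, crosses, elen, ne_eq, not_or, not_and, not_lt,
    Prod.mk.injEq] at *
  obtain ⟨⟨hni1, hni2⟩, hni3 | hni3⟩ := hni <;>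
  obtain ⟨⟨hnpi1, hnpi2⟩, hnpi3 | hnpi3⟩ := hnpi <;>
  obtain ⟨⟨hnj1, hnj2⟩, hnj3 | hnj3⟩ := hnj <;>
  obtain ⟨⟨hnpj1, hnpj2⟩, hnpj3 | hnpj3⟩ := hnpj <;>
  rcases hconf with h | h | h <;>
  omega

set_option maxHeartbeats 1600000 in
lemma localC (i j : ℕ) (e ep f fp : Edge)
    (hij : i ≠ j)
    (hni : isNear e i) (hnpi : isNear ep i) (hnj : isNear f j) (hnpj : isNear fp j)
    (hef : e ≠ f)
    (hCi : ep.1 = i ∧ (e.2 = i + 1 ∨ elen e ≤ elen ep))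
    (hCj : fp.1 = j ∧ (f.2 = j + 1 ∨ elen f ≤ elen fp))
    (hT1 : coversGap e j → covers e f)
    (hconf : crosses e fp ∨ (covers fp e ∧ coversGap e j) ∨ (covers e fp ∧ coversGap fp i)) :
    f.2 ≤ e.2 ∧ (f.2 = e.2 → e.1 < f.1) := by
  obtain ⟨e0, e1⟩ := e
  obtain ⟨a0, a1⟩ := ep
  obtain ⟨f0, f1⟩ := f
  obtain ⟨b0, b1⟩ := fp
  simp only [isNear, coversGap, covers, crosses, elen, ne_eq, not_or, not_and, not_lt,
    Prod.mk.injEq] at *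
  obtain ⟨⟨hni1, hni2⟩, hni3 | hni3⟩ := hni <;>
  obtain ⟨⟨hnpi1, hnpi2⟩, hnpi3 | hnpi3⟩ := hnpi <;>
  obtain ⟨⟨hnj1, hnj2⟩, hnj3 | hnj3⟩ := hnj <;>
  obtain ⟨⟨hnpj1, hnpj2⟩, hnpj3 | hnpj3⟩ := hnpj <;>
  rcases hconf with h | h | h <;>
  omega

/-- the vertex set of the conflict graph `H(T,T')` (the near-near
gaps) can be partitioned into three sets, each inducing an acyclic subgraph; in
particular `H` has an acyclic induced subgraph on at least `|V(H)|/3` vertices. -/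
theorem stmt9 (n : ℕ) (T T' : Finset Edge) (ρ ρ' : ℕ → Edge)
    (hT : IsNCSpanningTree n T) (hT' : IsNCSpanningTree n T')
    (hρ : IsRho n T ρ) (hbij : RhoBij n T ρ)
    (hρ' : IsRho n T' ρ') (hbij' : RhoBij n T' ρ') :
    ∃ A B C : Finset ℕ,
      A ∪ B ∪ C = (Finset.range (n - 1)).filter (NearNear n ρ ρ') ∧
      Disjoint A B ∧ Disjoint A C ∧ Disjoint B C ∧
      AcyclicOn (conflictEdge ρ ρ') (A : Set ℕ) ∧
      AcyclicOn (conflictEdge ρ ρ') (B : Set ℕ) ∧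
      AcyclicOn (conflictEdge ρ ρ') (C : Set ℕ) ∧
      ∃ Y ⊆ (Finset.range (n - 1)).filter (NearNear n ρ ρ'),
        AcyclicOn (conflictEdge ρ ρ') (Y : Set ℕ) ∧
        ((Finset.range (n - 1)).filter (NearNear n ρ ρ')).card ≤ 3 * Y.card := by
  classical
  set V : Finset ℕ := (Finset.range (n - 1)).filter (NearNear n ρ ρ') with hVdef
  set PA : ℕ → Prop := fun x => ((ρ x).1 = x ↔ (ρ' x).1 = x) ∧ elen (ρ' x) < elen (ρ x)
    with hPAdef
  set PB : ℕ → Prop := fun x => ¬ PA x ∧ (ρ' x).2 = x + 1 with hPBdef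
  set PC : ℕ → Prop := fun x => ¬ PA x ∧ (ρ' x).2 ≠ x + 1 with hPCdef
  have hnn : ∀ x ∈ V, NearNear n ρ ρ' x := fun x hx => (Finset.mem_filter.mp hx).2
  -- acyclicity of the three parts
  have hacA : AcyclicOn (conflictEdge ρ ρ') ((V.filter PA : Finset ℕ) : Set ℕ) := by
    apply acyclicOn_of_mono _ _ (fun x => elen (ρ x))
    intro x hx y hy hR
    rw [Finset.mem_coe, Finset.mem_filter] at hx hy
    obtain ⟨hxV, hxA⟩ := hx
    obtain ⟨hyV, hyA⟩ := hy
    obtain ⟨hx1, hx2, hx3, hx4⟩ := hnn x hxV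
    obtain ⟨hy1, hy2, hy3, hy4⟩ := hnn y hyV
    obtain ⟨hxy, hdisj⟩ := hR
    exact localA x y _ _ _ _ hxy hx3 hx4 hy3 hy4 hxA hyA
      (hT.2.1 _ (hρ x hx1).1 _ (hρ y hy1).1) hdisj
  have hBclass : ∀ x, x + 1 < n → NearNear n ρ ρ' x → PB x →
      (ρ' x).2 = x + 1 ∧ ((ρ x).1 = x ∨ elen (ρ x) ≤ elen (ρ' x)) := by
    intro x hx1 hxnn hxB
    obtain ⟨hnA, hL⟩ := hxB
    refine ⟨hL, ?_⟩
    rcases hxnn.2.2.2.2 with ⟨h1, h2⟩ | ⟨h1, h2⟩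
    · exact absurd hL h2
    · by_cases he : (ρ x).1 = x
      · exact Or.inl he
      · by_contra hlt
        exact hnA ⟨iff_of_false he h1, not_le.mp fun hle => hlt (Or.inr hle)⟩
  have hCclass : ∀ x, x + 1 < n → NearNear n ρ ρ' x → PC x →
      (ρ' x).1 = x ∧ ((ρ x).2 = x + 1 ∨ elen (ρ x) ≤ elen (ρ' x)) := by
    intro x hx1 hxnn hxC
    obtain ⟨hnA, hR⟩ := hxC
    rcases hxnn.2.2.2.2 with ⟨h1, h2⟩ | ⟨h1, h2⟩
    · refine ⟨h1, ?_⟩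
      by_cases he : (ρ x).1 = x
      · by_contra hlt
        push_neg at hlt
        exact hnA ⟨iff_of_true he h1, hlt.2⟩
      · rcases hxnn.2.2.1.2 with ⟨g1, g2⟩ | ⟨g1, g2⟩
        · exact absurd g1 he
        · exact Or.inl g2
    · exact absurd h2 hR
  have hacB : AcyclicOn (conflictEdge ρ ρ') ((V.filter PB : Finset ℕ) : Set ℕ) := by
    apply acyclicOn_of_mono _ _ (fun x => toLex ((ρ x).1, n - (ρ x).2))
    intro x hx y hy hR
    rw [Finset.mem_coe, Finset.mem_filter] at hx hy
    obtain ⟨hxV, hxB⟩ := hx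
    obtain ⟨hyV, hyB⟩ := hy
    obtain ⟨hx1, hx2, hx3, hx4⟩ := hnn x hxV
    obtain ⟨hy1, hy2, hy3, hy4⟩ := hnn y hyV
    obtain ⟨hxy, hdisj⟩ := hR
    have hef : ρ x ≠ ρ y := fun hEq => hxy (hbij.1 x y hx1 hy1 hEq)
    have hkey := localB x y _ _ _ _ hxy hx3 hx4 hy3 hy4 hef
      (hBclass x hx1 (hnn x hxV) hxB) (hBclass y hy1 (hnn y hyV) hyB)
      (fun hc => rho_covers hT.2.1 hρ hy1 (hρ x hx1).1 hc) hdisj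
    have hbx : (ρ x).2 < n := (hT.1 _ (hρ x hx1).1).2
    have hby : (ρ y).2 < n := (hT.1 _ (hρ y hy1).1).2
    rw [Prod.Lex.lt_iff]
    simp only [ofLex_toLex]
    omega
  have hacC : AcyclicOn (conflictEdge ρ ρ') ((V.filter PC : Finset ℕ) : Set ℕ) := by
    apply acyclicOn_of_mono _ _ (fun x => toLex ((n - (ρ x).2, (ρ x).1) : ℕ × ℕ))
    intro x hx y hy hR
    rw [Finset.mem_coe, Finset.mem_filter] at hx hy
    obtain ⟨hxV, hxC⟩ := hx
    obtain ⟨hyV, hyC⟩ := hy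
    obtain ⟨hx1, hx2, hx3, hx4⟩ := hnn x hxV
    obtain ⟨hy1, hy2, hy3, hy4⟩ := hnn y hyV
    obtain ⟨hxy, hdisj⟩ := hR
    have hef : ρ x ≠ ρ y := fun hEq => hxy (hbij.1 x y hx1 hy1 hEq)
    have hkey := localC x y _ _ _ _ hxy hx3 hx4 hy3 hy4 hef
      (hCclass x hx1 (hnn x hxV) hxC) (hCclass y hy1 (hnn y hyV) hyC)
      (fun hc => rho_covers hT.2.1 hρ hy1 (hρ x hx1).1 hc) hdisj
    have hbx : (ρ x).2 < n := (hT.1 _ (hρ x hx1).1).2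
    have hby : (ρ y).2 < n := (hT.1 _ (hρ y hy1).1).2
    rw [Prod.Lex.lt_iff]
    simp only [ofLex_toLex]
    omega
  -- union and disjointness
  have hunion : V.filter PA ∪ V.filter PB ∪ V.filter PC = V := by
    ext x
    simp only [Finset.mem_union, Finset.mem_filter, hPBdef, hPCdef]
    tauto
  have hAB : Disjoint (V.filter PA) (V.filter PB) := by
    rw [Finset.disjoint_left]
    intro x hx hy
    rw [Finset.mem_filter] at hx hy
    exact hy.2.1 hx.2
  have hAC : Disjoint (V.filter PA) (V.filter PC) := by
    rw [Finset.disjoint_left]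
    intro x hx hy
    rw [Finset.mem_filter] at hx hy
    exact hy.2.1 hx.2
  have hBC : Disjoint (V.filter PB) (V.filter PC) := by
    rw [Finset.disjoint_left]
    intro x hx hy
    rw [Finset.mem_filter] at hx hy
    exact hy.2.2 hx.2.2
  have hcard : V.card = (V.filter PA).card + (V.filter PB).card + (V.filter PC).card := by
    conv_lhs => rw [← hunion]
    rw [Finset.card_union_of_disjoint (Finset.disjoint_union_left.mpr ⟨hAC, hBC⟩),
      Finset.card_union_of_disjoint hAB]
  refine ⟨V.filter PA, V.filter PB, V.filter PC, hunion, hAB, hAC, hBC, hacA, hacB, hacC, ?_⟩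
  by_cases h1 : (V.filter PB).card ≤ (V.filter PA).card ∧
      (V.filter PC).card ≤ (V.filter PA).card
  · exact ⟨V.filter PA, Finset.filter_subset _ _, hacA, by omega⟩
  · by_cases h2 : (V.filter PC).card ≤ (V.filter PB).card
    · exact ⟨V.filter PB, Finset.filter_subset _ _, hacB, by omega⟩
    · exact ⟨V.filter PC, Finset.filter_subset _ _, hacC, by omega⟩


end NCST
end

section
/- Let T be a non-crossing spanning tree on linearly ordered points p_1,...,p_n with gap-edge bijection ρ_T, let e_j = ρ_T(g_j), and let e' = {p_x,p_y} be an edge not in T such that e' covers g_j, e' crosses no edge of T - e_j, and there is no edge e_i ∈ T - e_j with (a) e' covers e_i and e_i covers g_j, or (b) e_i covers e' and e' covers g_i (where g_i is the gap of e_i). Then T' := (T - e_j) + e' is a non-crossing spanning tree, each common edge e ∈ T ∩ T' has the same associated gap in T and T' (ρ_T^{-1}(e) = ρ_{T'}^{-1}(e)), and e' is associated to gap g_j in T'. -/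
/- Non-crossing spanning trees on linearly ordered points p_0, ..., p_{n-1}.
An edge is a pair (a, b) of indices with a < b < n.
Gap k (for k + 1 < n) lies between points k and k+1. -/

namespace NCST

attribute [local instance] Classical.propDecidable

/-! ### Auxiliary lemmas -/

section Aux

variable {n : ℕ}

lemma aux_covers_elen {e f : Edge} (h : covers e f) : elen f ≤ elen e := by
  obtain ⟨h1, h2⟩ := h; unfold elen; omega

lemma aux_covers_eq {e f : Edge} (h : covers e f) (hf : f.1 < f.2) (hl : elen e ≤ elen f) :
    e = f := by
  obtain ⟨h1, h2⟩ := h; unfold elen at hl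
  have h3 : e.1 = f.1 ∧ e.2 = f.2 := by omega
  exact Prod.ext h3.1 h3.2

lemma aux_cover_total {e f : Edge} {k : ℕ} (he : e.1 < e.2) (hf : f.1 < f.2)
    (hek : coversGap e k) (hfk : coversGap f k) (hnc : ¬ crosses e f) :
    covers e f ∨ covers f e := by
  unfold coversGap at hek hfk
  unfold crosses at hnc
  unfold covers
  omega

lemma aux_crosses_comm {e f : Edge} : crosses e f ↔ crosses f e := by
  unfold crosses; tauto

lemma aux_crosses_irrefl (e : Edge) : ¬ crosses e e := by
  unfold crosses; omega

lemma graphOf_adj {E : Finset Edge} {u v : Fin n} :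
    (graphOf n E).Adj u v ↔ u ≠ v ∧ (((u : ℕ), (v : ℕ)) ∈ E ∨ ((v : ℕ), (u : ℕ)) ∈ E) := by
  simp [graphOf, SimpleGraph.fromRel_adj]

lemma graphOf_mono {E F : Finset Edge} (h : E ⊆ F) : graphOf n E ≤ graphOf n F := by
  intro u v huv
  rw [graphOf_adj] at huv ⊢
  exact ⟨huv.1, huv.2.imp (fun h' => h h') (fun h' => h h')⟩

/-- Chaining reachability across consecutive gaps. -/
lemma chain_reach {G : SimpleGraph (Fin n)} :
    ∀ c (hc : c < n) a (ha : a < n), a ≤ c →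
      (∀ m (hm1 : a ≤ m) (hm2 : m + 1 ≤ c), G.Reachable ⟨m, by omega⟩ ⟨m + 1, by omega⟩) →
      G.Reachable ⟨a, ha⟩ ⟨c, hc⟩ := by
  intro c
  induction c with
  | zero =>
    intro hc a ha hac _
    have : a = 0 := by omega
    subst this
    exact SimpleGraph.Reachable.refl _
  | succ c ih =>
    intro hc a ha hac hcons
    by_cases h : a = c + 1
    · subst h
      exact SimpleGraph.Reachable.refl _
    · have h1 : a ≤ c := by omega
      have h2 := ih (by omega) a ha h1 (fun m hm1 hm2 => hcons m hm1 (by omega))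
      exact h2.trans (hcons c (by omega) (by omega))

/-- Consecutive points are reachable, by strong induction on the length of the
assigned shortest edge. -/
lemma consec_reach {E : Finset Edge} {ρ : ℕ → Edge}
    (hE : ValidEdges n E) (hnc : NonCrossing E) (hρ : IsRho n E ρ)
    (hinj : ∀ k l, k + 1 < n → l + 1 < n → ρ k = ρ l → k = l) :
    ∀ L k (hk : k + 1 < n), elen (ρ k) ≤ L →
      (graphOf n E).Reachable ⟨k, by omega⟩ ⟨k + 1, hk⟩ := by
  intro L
  induction L with
  | zero =>
    intro k hk hL
    exfalso
    obtain ⟨_, hcov, _⟩ := hρ k hk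
    obtain ⟨h1, h2⟩ := hcov
    unfold elen at hL
    omega
  | succ L ih =>
    intro k hk hL
    obtain ⟨hmem, hcov, hmin⟩ := hρ k hk
    obtain ⟨hc1, hc2⟩ := hcov
    have hv := hE _ hmem
    -- each gap m strictly inside [ (ρ k).1, (ρ k).2 ), m ≠ k, has a strictly shorter edge
    have key : ∀ m (hm1 : (ρ k).1 ≤ m) (hm2 : m + 1 ≤ (ρ k).2) (hmk : m ≠ k),
        (graphOf n E).Reachable ⟨m, by omega⟩ ⟨m + 1, by omega⟩ := by
      intro m hm1 hm2 hmk
      have hmn : m + 1 < n := by omega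
      obtain ⟨hm_mem, hm_cov, hm_min⟩ := hρ m hmn
      have hecovm : coversGap (ρ k) m := ⟨hm1, hm2⟩
      have h1 : elen (ρ m) ≤ elen (ρ k) := hm_min _ hmem hecovm
      have hvm := hE _ hm_mem
      have htot := aux_cover_total hv.1 hvm.1 hecovm hm_cov (hnc _ hmem _ hm_mem)
      have hcv : covers (ρ k) (ρ m) := by
        rcases htot with h | h
        · exact h
        · exfalso
          have heq := aux_covers_eq h hv.1 h1
          exact hmk (hinj m k hmn hk heq)
      have hlt : elen (ρ m) < elen (ρ k) := by
        rcases Nat.lt_or_ge (elen (ρ m)) (elen (ρ k)) with h | h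
        · exact h
        · exfalso
          have heq := aux_covers_eq hcv hvm.1 h
          exact hmk (hinj m k hmn hk heq.symm)
      exact ih m hmn (by omega)
    -- chain from k down to (ρ k).1, jump the edge, chain from (ρ k).2 to k+1
    have r1 : (graphOf n E).Reachable ⟨(ρ k).1, by omega⟩ ⟨k, by omega⟩ := by
      refine chain_reach k (by omega) (ρ k).1 (by omega) hc1 ?_
      intro m hm1 hm2
      exact key m hm1 (by omega) (by omega)
    have r2 : (graphOf n E).Reachable ⟨k + 1, by omega⟩ ⟨(ρ k).2, by omega⟩ := by
      refine chain_reach (ρ k).2 (by omega) (k + 1) (by omega) hc2 ?_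
      intro m hm1 hm2
      exact key m (by omega) hm2 (by omega)
    have radj : (graphOf n E).Adj ⟨(ρ k).1, by omega⟩ ⟨(ρ k).2, by omega⟩ := by
      rw [graphOf_adj]
      refine ⟨?_, Or.inl ?_⟩
      · intro h
        have := congrArg Fin.val h
        simp only at this
        omega
      · simpa using hmem
    exact (r1.symm.trans radj.reachable).trans r2.symm

lemma connected_of {E : Finset Edge} {ρ : ℕ → Edge} (hn : 0 < n)
    (hE : ValidEdges n E) (hnc : NonCrossing E) (hρ : IsRho n E ρ)
    (hinj : ∀ k l, k + 1 < n → l + 1 < n → ρ k = ρ l → k = l) :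
    (graphOf n E).Connected := by
  rw [SimpleGraph.connected_iff]
  refine ⟨?_, ⟨⟨0, hn⟩⟩⟩
  have hcons : ∀ m (hm : m + 1 < n),
      (graphOf n E).Reachable ⟨m, by omega⟩ ⟨m + 1, by omega⟩ :=
    fun m hm => consec_reach hE hnc hρ hinj (elen (ρ m)) m hm le_rfl
  intro u v
  obtain ⟨u, hu⟩ := u
  obtain ⟨v, hv⟩ := v
  have h1 : (graphOf n E).Reachable ⟨0, hn⟩ ⟨u, hu⟩ := by
    refine chain_reach u hu 0 hn (by omega) ?_
    intro m hm1 hm2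
    exact hcons m (by omega)
  have h2 : (graphOf n E).Reachable ⟨0, hn⟩ ⟨v, hv⟩ := by
    refine chain_reach v hv 0 hn (by omega) ?_
    intro m hm1 hm2
    exact hcons m (by omega)
  exact h1.symm.trans h2

/-- The edge `f : Edge` is used by the walk `w`. -/
def usedIn {G : SimpleGraph (Fin n)} {u v : Fin n} (w : G.Walk u v) (f : Edge) : Prop :=
  ∃ a b : Fin n, s(a, b) ∈ w.edges ∧ (a : ℕ) = f.1 ∧ (b : ℕ) = f.2

lemma usedIn_append_left {G : SimpleGraph (Fin n)} {u v w : Fin n}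
    (p : G.Walk u v) (q : G.Walk v w) {f : Edge} (h : usedIn p f) :
    usedIn (p.append q) f := by
  obtain ⟨a, b, hm, ha, hb⟩ := h
  exact ⟨a, b, by rw [SimpleGraph.Walk.edges_append]; exact List.mem_append_left _ hm, ha, hb⟩

lemma usedIn_append_right {G : SimpleGraph (Fin n)} {u v w : Fin n}
    (p : G.Walk u v) (q : G.Walk v w) {f : Edge} (h : usedIn q f) :
    usedIn (p.append q) f := by
  obtain ⟨a, b, hm, ha, hb⟩ := h
  exact ⟨a, b, by rw [SimpleGraph.Walk.edges_append]; exact List.mem_append_right _ hm, ha, hb⟩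

/-- A walk from the left of gap `k` to its right uses an edge covering gap `k`. -/
lemma walk_cross {E : Finset Edge} (hE : ValidEdges n E) {u v : Fin n}
    (w : (graphOf n E).Walk u v) (k : ℕ) (hu : (u : ℕ) ≤ k) (hv : k < (v : ℕ)) :
    ∃ f ∈ E, coversGap f k ∧ usedIn w f := by
  induction w with
  | nil => omega
  | @cons x m y h p ih =>
    by_cases hm : (m : ℕ) ≤ k
    · obtain ⟨f, hf, hcov, a, b, hmem, ha, hb⟩ := ih hm hv
      exact ⟨f, hf, hcov, a, b, by
        rw [SimpleGraph.Walk.edges_cons]; exact List.mem_cons_of_mem _ hmem, ha, hb⟩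
    · push_neg at hm
      rcases (graphOf_adj.mp h).2 with hin | hin
      · refine ⟨((x : ℕ), (m : ℕ)), hin, ⟨hu, by omega⟩, x, m, ?_, rfl, rfl⟩
        rw [SimpleGraph.Walk.edges_cons]
        exact List.mem_cons_self
      · exfalso
        have := hE _ hin
        simp only at this
        omega

lemma walk_cross' {E : Finset Edge} (hE : ValidEdges n E) {u v : Fin n}
    (w : (graphOf n E).Walk u v) (k : ℕ) (hu : k < (u : ℕ)) (hv : (v : ℕ) ≤ k) :
    ∃ f ∈ E, coversGap f k ∧ usedIn w f := by
  obtain ⟨f, hf, hcov, a, b, hmem, ha, hb⟩ := walk_cross hE w.reverse k hv hu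
  refine ⟨f, hf, hcov, a, b, ?_, ha, hb⟩
  rw [SimpleGraph.Walk.edges_reverse, List.mem_reverse] at hmem
  exact hmem

/-- From a path whose endpoints are on one side of gap `k` but visiting a vertex on
the other side, extract two *distinct* edges covering gap `k`. -/
lemma two_cross {E : Finset Edge} (hE : ValidEdges n E) {u v : Fin n}
    (p : (graphOf n E).Walk u v) (hp : p.IsPath) (k : ℕ) (c : Fin n) (hc : c ∈ p.support)
    (hside : ((u : ℕ) ≤ k ∧ (v : ℕ) ≤ k ∧ k < (c : ℕ)) ∨
             (k < (u : ℕ) ∧ k < (v : ℕ) ∧ (c : ℕ) ≤ k)) :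
    ∃ f ∈ E, ∃ g ∈ E, f ≠ g ∧ coversGap f k ∧ coversGap g k ∧ usedIn p f ∧ usedIn p g := by
  obtain ⟨p1, p2, rfl⟩ := SimpleGraph.Walk.mem_support_iff_exists_append.mp hc
  have hnodup : (p1.append p2).edges.Nodup := hp.isTrail.edges_nodup
  rw [SimpleGraph.Walk.edges_append] at hnodup
  have hdisj := (List.nodup_append.mp hnodup).2.2
  have get2 : ∀ f g : Edge, f ∈ E → g ∈ E → usedIn p1 f → usedIn p2 g → f ≠ g := by
    intro f g hfE hgE ⟨a1, b1, hm1, ha1, hb1⟩ ⟨a2, b2, hm2, ha2, hb2⟩ heq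
    subst heq
    have hab : a1 = a2 := Fin.ext (by rw [ha1, ha2])
    have hbb : b1 = b2 := Fin.ext (by rw [hb1, hb2])
    subst hab; subst hbb
    exact hdisj _ hm1 _ hm2 rfl
  rcases hside with ⟨hu, hv, hcc⟩ | ⟨hu, hv, hcc⟩
  · obtain ⟨f, hfE, hfcov, hfused⟩ := walk_cross hE p1 k hu hcc
    obtain ⟨g, hgE, hgcov, hgused⟩ := walk_cross' hE p2 k hcc hv
    exact ⟨f, hfE, g, hgE, get2 f g hfE hgE hfused hgused, hfcov, hgcov,
      usedIn_append_left _ _ hfused, usedIn_append_right _ _ hgused⟩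
  · obtain ⟨f, hfE, hfcov, hfused⟩ := walk_cross' hE p1 k hu hcc
    obtain ⟨g, hgE, hgcov, hgused⟩ := walk_cross hE p2 k hcc hv
    exact ⟨f, hfE, g, hgE, get2 f g hfE hgE hfused hgused, hfcov, hgcov,
      usedIn_append_left _ _ hfused, usedIn_append_right _ _ hgused⟩

/-- Key separation lemma: under the hypotheses of the flip lemma, the endpoints of
`e'` are not connected in `T - ρ j`. -/
lemma key_sep {T : Finset Edge} {ρ : ℕ → Edge} {j : ℕ}
    (hval : ValidEdges n T) (hncT : NonCrossing T)
    (hρ : IsRho n T ρ) (hbij : RhoBij n T ρ) (hj : j + 1 < n)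
    {e' : Edge} (he'v : e'.1 < e'.2 ∧ e'.2 < n)
    (hcov : coversGap e' j)
    (hcoverse' : ∀ f ∈ T.erase (ρ j), coversGap f j → covers f e')
    (hb : ∀ i, i + 1 < n → i ≠ j → ¬ (covers (ρ i) e' ∧ coversGap e' i)) :
    ¬ (graphOf n (T.erase (ρ j))).Reachable ⟨e'.1, by omega⟩ ⟨e'.2, he'v.2⟩ := by
  intro hreach
  obtain ⟨w⟩ := hreach
  set E₀ := T.erase (ρ j) with hE₀
  have hval₀ : ValidEdges n E₀ := fun e he => hval e (Finset.mem_of_mem_erase he)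
  set p := w.bypass with hpdef
  have hp : p.IsPath := w.bypass_isPath
  -- the set of used edges covering gap j
  set S := E₀.filter (fun f => coversGap f j ∧ usedIn p f) with hS
  have hSne : S.Nonempty := by
    obtain ⟨f, hf, hcovf, hused⟩ := walk_cross hval₀ p j hcov.1 (by
      have := hcov.2; simp only; omega)
    exact ⟨f, Finset.mem_filter.mpr ⟨hf, hcovf, hused⟩⟩
  obtain ⟨hst, hstS, hmax⟩ := S.exists_max_image elen hSne
  rw [Finset.mem_filter] at hstS
  obtain ⟨hstE₀, hstcovj, hstused⟩ := hstS
  have hstT : hst ∈ T := Finset.mem_of_mem_erase hstE₀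
  have hstv := hval _ hstT
  -- the gap of hst
  obtain ⟨i, hi, hρi⟩ := hbij.2 hst hstT
  have hij : i ≠ j := by
    intro h
    exact (Finset.mem_erase.mp hstE₀).1 (by rw [← hρi, h])
  have hstcove' : covers hst e' := hcoverse' hst hstE₀ hstcovj
  have hstcovi : coversGap hst i := by
    have := (hρ i hi).2.1
    rwa [hρi] at this
  have hnotcov : ¬ coversGap e' i := by
    intro h
    exact hb i hi hij ⟨by rwa [hρi], h⟩
  -- get the offending vertex of p on the far side of gap i
  obtain ⟨a, b, hmem, hav, hbv⟩ := hstused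
  have hside : (i < e'.1 ∧ (a : ℕ) ≤ i) ∨ (e'.2 ≤ i ∧ i < (b : ℕ)) := by
    unfold coversGap at hnotcov hstcovi
    omega
  have hmain : ∃ f ∈ E₀, ∃ g ∈ E₀, f ≠ g ∧ coversGap f i ∧ coversGap g i ∧
      usedIn p f ∧ usedIn p g := by
    rcases hside with ⟨h1, h2⟩ | ⟨h1, h2⟩
    · exact two_cross hval₀ p hp i a (p.fst_mem_support_of_mem_edges hmem)
        (Or.inr ⟨by show i < e'.1; omega, by show i < e'.2; omega, h2⟩)
    · exact two_cross hval₀ p hp i b (p.snd_mem_support_of_mem_edges hmem)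
        (Or.inl ⟨by show e'.1 ≤ i; omega, by show e'.2 ≤ i; omega, h2⟩)
  obtain ⟨f, hf, g, hg, hfg, hfcov, hgcov, hfused, hgused⟩ := hmain
  -- one of f, g differs from hst
  have hpick : ∃ h ∈ E₀, h ≠ hst ∧ coversGap h i ∧ usedIn p h := by
    by_cases hfh : f = hst
    · exact ⟨g, hg, by rw [← hfh]; exact fun h => hfg h.symm, hgcov, hgused⟩
    · exact ⟨f, hf, hfh, hfcov, hfused⟩
  obtain ⟨h, hhE₀, hhne, hhcov, hhused⟩ := hpick
  have hhT : h ∈ T := Finset.mem_of_mem_erase hhE₀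
  have hhv := hval _ hhT
  -- hst = ρ i is shortest among T-edges covering gap i
  have hmin : elen hst ≤ elen h := by
    have := (hρ i hi).2.2 h hhT hhcov
    rwa [hρi] at this
  have htot := aux_cover_total hhv.1 hstv.1 hhcov hstcovi (hncT _ hhT _ hstT)
  have hcovh : covers h hst := by
    rcases htot with h' | h'
    · exact h'
    · exact absurd (aux_covers_eq h' hhv.1 hmin).symm hhne
  -- h covers gap j, so h ∈ S, contradicting maximality of hst
  have hhcovj : coversGap h j := by
    obtain ⟨hh1, hh2⟩ := hcovh
    obtain ⟨hs1, hs2⟩ := hstcovj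
    exact ⟨by omega, by omega⟩
  have hhS : h ∈ S := Finset.mem_filter.mpr ⟨hhE₀, hhcovj, hhused⟩
  have := hmax h hhS
  exact hhne (aux_covers_eq hcovh hstv.1 this)

end Aux

/-- flip lemma: if `e'` covers the gap `g_j`, crosses no edge of
`T - e_j`, and no edge `e_i` of `T - e_j` satisfies the two forbidden covering
patterns, then `(T - e_j) + e'` is a non-crossing spanning tree in which every
common edge keeps its associated gap and `e'` is associated to gap `g_j`. -/
theorem stmt13 (n : ℕ) (T : Finset Edge) (ρ : ℕ → Edge) (j : ℕ)
    (hT : IsNCSpanningTree n T) (hρ : IsRho n T ρ) (hbij : RhoBij n T ρ)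
    (hj : j + 1 < n) (e' : Edge) (he'v : e'.1 < e'.2 ∧ e'.2 < n) (he'T : e' ∉ T)
    (hcov : coversGap e' j)
    (hcross : ∀ f ∈ T, f ≠ ρ j → ¬ crosses e' f)
    (ha : ∀ i, i + 1 < n → i ≠ j → ¬ (covers e' (ρ i) ∧ coversGap (ρ i) j))
    (hb : ∀ i, i + 1 < n → i ≠ j → ¬ (covers (ρ i) e' ∧ coversGap e' i)) :
    IsNCSpanningTree n (insert e' (T.erase (ρ j))) ∧
    IsRho n (insert e' (T.erase (ρ j))) (Function.update ρ j e') ∧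
    RhoBij n (insert e' (T.erase (ρ j))) (Function.update ρ j e') := by
  obtain ⟨hvalT, hncT, htree⟩ := hT
  set E₀ := T.erase (ρ j) with hE₀
  set T' := insert e' E₀ with hT'def
  have hρjT : ρ j ∈ T := (hρ j hj).1
  -- every edge of `T - ρ j` covering gap `j` covers `e'`
  have hcoverse' : ∀ f ∈ E₀, coversGap f j → covers f e' := by
    intro f hf hfj
    have hfT := Finset.mem_of_mem_erase hf
    have hfne : f ≠ ρ j := (Finset.mem_erase.mp hf).1
    have hvf := hvalT f hfT
    rcases aux_cover_total he'v.1 hvf.1 hcov hfj (hcross f hfT hfne) with h | h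
    · exfalso
      obtain ⟨i, hi, hρi⟩ := hbij.2 f hfT
      have hij : i ≠ j := fun h' => hfne (by rw [← hρi, h'])
      exact ha i hi hij ⟨by rwa [hρi], by rwa [hρi]⟩
    · exact h
  have hsep := key_sep hvalT hncT hρ hbij hj he'v hcov hcoverse' hb
  -- valid edges
  have hval' : ValidEdges n T' := by
    intro e he
    rcases Finset.mem_insert.mp he with rfl | he
    · exact he'v
    · exact hvalT e (Finset.mem_of_mem_erase he)
  -- non-crossing
  have hnc' : NonCrossing T' := by
    intro e he f hf
    rcases Finset.mem_insert.mp he with he1 | he1 <;> rcases Finset.mem_insert.mp hf with hf1 | hf1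
    · rw [he1, hf1]; exact aux_crosses_irrefl _
    · rw [he1]; exact hcross f (Finset.mem_of_mem_erase hf1) (Finset.mem_erase.mp hf1).1
    · rw [hf1, aux_crosses_comm]
      exact hcross e (Finset.mem_of_mem_erase he1) (Finset.mem_erase.mp he1).1
    · exact hncT e (Finset.mem_of_mem_erase he1) f (Finset.mem_of_mem_erase hf1)
  -- the new gap assignment
  have hρ'2 : IsRho n T' (Function.update ρ j e') := by
    intro k hk
    by_cases hkj : k = j
    · subst hkj
      rw [Function.update_self]
      refine ⟨Finset.mem_insert_self _ _, hcov, ?_⟩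
      intro f hf hfj
      rcases Finset.mem_insert.mp hf with rfl | hf
      · exact le_rfl
      · exact aux_covers_elen (hcoverse' f hf hfj)
    · rw [Function.update_of_ne hkj]
      obtain ⟨hmem, hcovk, hmin⟩ := hρ k hk
      have hne : ρ k ≠ ρ j := fun h => hkj (hbij.1 k j hk hj h)
      refine ⟨Finset.mem_insert_of_mem (Finset.mem_erase.mpr ⟨hne, hmem⟩), hcovk, ?_⟩
      intro f hf hfk
      rcases Finset.mem_insert.mp hf with rfl | hf
      · rcases aux_cover_total (hvalT _ hmem).1 he'v.1 hcovk hfk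
          (fun hcr => hcross (ρ k) hmem hne (aux_crosses_comm.mpr hcr)) with h | h
        · exact absurd ⟨h, hfk⟩ (hb k hk hkj)
        · exact aux_covers_elen h
      · exact hmin f (Finset.mem_of_mem_erase hf) hfk
  have hbij' : RhoBij n T' (Function.update ρ j e') := by
    constructor
    · intro k l hk hl heq
      by_cases hkj : k = j <;> by_cases hlj : l = j
      · rw [hkj, hlj]
      · exfalso
        rw [hkj, Function.update_self, Function.update_of_ne hlj] at heq
        exact he'T (by rw [heq]; exact (hρ l hl).1)
      · exfalso
        rw [hlj, Function.update_self, Function.update_of_ne hkj] at heq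
        exact he'T (by rw [← heq]; exact (hρ k hk).1)
      · rw [Function.update_of_ne hkj, Function.update_of_ne hlj] at heq
        exact hbij.1 k l hk hl heq
    · intro e he
      rcases Finset.mem_insert.mp he with rfl | he
      · exact ⟨j, hj, Function.update_self _ _ _⟩
      · obtain ⟨k, hk, hρk⟩ := hbij.2 e (Finset.mem_of_mem_erase he)
        have hkj : k ≠ j := fun h => (Finset.mem_erase.mp he).1 (by rw [← hρk, h])
        exact ⟨k, hk, by rw [Function.update_of_ne hkj]; exact hρk⟩
  -- connectivity
  have hconn : (graphOf n T').Connected :=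
    connected_of (by omega) hval' hnc' hρ'2 hbij'.1
  -- acyclicity
  have hx1 : e'.1 < n := by omega
  have hadj : (graphOf n T').Adj ⟨e'.1, hx1⟩ ⟨e'.2, he'v.2⟩ := by
    rw [graphOf_adj]
    refine ⟨?_, Or.inl ?_⟩
    · intro h
      have := congrArg Fin.val h
      simp only at this
      omega
    · show (e'.1, e'.2) ∈ T'
      exact Finset.mem_insert_self e' E₀
  have hsub2 : ∀ u v : Fin n, (graphOf n T').Adj u v →
      s(u, v) ≠ s((⟨e'.1, hx1⟩ : Fin n), (⟨e'.2, he'v.2⟩ : Fin n)) →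
      (graphOf n E₀).Adj u v := by
    intro u v huv hne
    rw [graphOf_adj] at huv ⊢
    refine ⟨huv.1, ?_⟩
    rcases huv.2 with h | h
    · rcases Finset.mem_insert.mp h with h' | h'
      · exfalso
        apply hne
        have hu : u = ⟨e'.1, hx1⟩ := Fin.ext (congrArg Prod.fst h')
        have hv : v = ⟨e'.2, he'v.2⟩ := Fin.ext (congrArg Prod.snd h')
        rw [hu, hv]
      · exact Or.inl h'
    · rcases Finset.mem_insert.mp h with h' | h'
      · exfalso
        apply hne
        have hu : u = ⟨e'.2, he'v.2⟩ := Fin.ext (congrArg Prod.snd h')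
        have hv : v = ⟨e'.1, hx1⟩ := Fin.ext (congrArg Prod.fst h')
        rw [hu, hv, Sym2.eq_swap]
      · exact Or.inr h'
  have hbridge : (graphOf n T').IsBridge
      s((⟨e'.1, hx1⟩ : Fin n), (⟨e'.2, he'v.2⟩ : Fin n)) := by
    rw [SimpleGraph.isBridge_iff]
    refine fun hr => hsep ?_
    refine SimpleGraph.Reachable.mono ?_ hr
    intro u v huv
    rw [SimpleGraph.deleteEdges_adj] at huv
    obtain ⟨h1, h2⟩ := huv
    refine hsub2 u v h1 fun heq => h2 ?_
    rw [heq]; exact Set.mem_singleton _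
  have hacy : (graphOf n T').IsAcyclic := by
    intro v c hc
    by_cases hmem : s((⟨e'.1, hx1⟩ : Fin n), (⟨e'.2, he'v.2⟩ : Fin n)) ∈ c.edges
    · exact hbridge.notMem_edges_of_isCycle hc hmem
    · have hsub : ∀ e ∈ c.edges, e ∈ (graphOf n T).edgeSet := by
        intro e he
        revert he
        refine Sym2.ind (fun u v' he => ?_) e
        have hadj' : (graphOf n T').Adj u v' := c.adj_of_mem_edges he
        have hne : s(u, v') ≠ s((⟨e'.1, hx1⟩ : Fin n), (⟨e'.2, he'v.2⟩ : Fin n)) :=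
          fun h => hmem (h ▸ he)
        exact ((graphOf n T).mem_edgeSet).mpr
          (graphOf_mono (Finset.erase_subset _ _) (hsub2 u v' hadj' hne))
      exact htree.IsAcyclic (c.transfer _ hsub) (hc.transfer hsub)
  exact ⟨⟨hval', hnc', ⟨hconn, hacy⟩⟩, hρ'2, hbij'⟩

end NCST
end
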